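/- arXiv:1510.08904 — 2 statements merged into one kernel-verified Lean document; each statement's English description precedes it below -/
import Mathlib

section
/- Let L = L₀ ⊕ L₁ be a restricted Lie superalgebra over a field of characteristic p > 2 such that every ad x with x ∈ L₀ is nilpotent on L, L contains a homogeneous restricted ideal A of finite codimension with A' finite-dimensional and (A',A') = 0, and either (L₁,L₁) is p-nilpotent or (L₀,L₁) = 0. Then L is nilpotent. -/
open Module

namespace SupEng

variable {F : Type*} [Field F]

section RingLemmas
variable {R : Type*} [Ring R] [Algebra F R]

lemma comm_add_add (a b c d : R) :
    (a+b)*(c+d) - (c+d)*(a+b) =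
      (a*c - c*a) + ((a*d - d*a) + ((b*c - c*b) + (b*d - d*b))) := by noncomm_ring

lemma acomm_add_add (a b c d : R) :
    (a+b)*(c+d) + (c+d)*(a+b) =
      (a*c + c*a) + ((a*d + d*a) + ((b*c + c*b) + (b*d + d*b))) := by noncomm_ring

lemma comm_smul_left (r : F) (a b : R) : (r•a)*b - b*(r•a) = r•(a*b - b*a) := by
  rw [smul_mul_assoc, mul_smul_comm, smul_sub]

lemma comm_smul_right (r : F) (a b : R) : a*(r•b) - (r•b)*a = r•(a*b - b*a) := by
  rw [smul_mul_assoc, mul_smul_comm, smul_sub]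

lemma acomm_smul_left (r : F) (a b : R) : (r•a)*b + b*(r•a) = r•(a*b + b*a) := by
  rw [smul_mul_assoc, mul_smul_comm, smul_add]

lemma acomm_smul_right (r : F) (a b : R) : a*(r•b) + (r•b)*a = r•(a*b + b*a) := by
  rw [smul_mul_assoc, mul_smul_comm, smul_add]

lemma sq_mem_of_acomm {G : Submodule F R} (h2 : (2:F) ≠ 0) {z : R}
    (h : z*z + z*z ∈ G) : z*z ∈ G := by
  have : z*z = (2:F)⁻¹ • (z*z + z*z) := by
    rw [← two_smul F (z*z), smul_smul, inv_mul_cancel₀ h2, one_smul]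
  rw [this]; exact G.smul_mem _ h

lemma isNilpotent_of_sq {z : R} (h : IsNilpotent (z*z)) : IsNilpotent z := by
  obtain ⟨k, hk⟩ := h
  exact ⟨2*k, by rw [pow_mul, ← hk]; congr 1; rw [sq]⟩

/-- `ad a` is a nilpotent endomorphism of `R` when `a` is nilpotent. -/
lemma isNilpotent_adEnd {a : R} (h : IsNilpotent a) :
    IsNilpotent (LinearMap.mulLeft F a - LinearMap.mulRight F a) := by
  refine Commute.isNilpotent_sub (LinearMap.commute_mulLeft_right a a) ?_ ?_
  · obtain ⟨k, hk⟩ := h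
    exact ⟨k, by rw [LinearMap.pow_mulLeft, hk]; ext t; simp⟩
  · obtain ⟨k, hk⟩ := h
    exact ⟨k, by rw [LinearMap.pow_mulRight, hk]; ext t; simp⟩

lemma adEnd_apply (a t : R) :
    (LinearMap.mulLeft F a - LinearMap.mulRight F a) t = a*t - t*a := by simp

lemma comm_add_left (a b c : R) :
    (a+b)*c - c*(a+b) = (a*c - c*a) + (b*c - c*b) := by noncomm_ring

end RingLemmas

section Helpers
variable {V : Type*} [AddCommGroup V] [Module F V]

lemma fd_of_le {p q : Submodule F V} (h : p ≤ q) [FiniteDimensional F q] :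
    FiniteDimensional F p :=
  Module.Finite.equiv (Submodule.comapSubtypeEquivOfLe h)

lemma finrank_le_of_le {p q : Submodule F V} (h : p ≤ q) [FiniteDimensional F q] :
    finrank F p ≤ finrank F q := by
  rw [← LinearEquiv.finrank_eq (Submodule.comapSubtypeEquivOfLe h)]
  exact Submodule.finrank_le _

lemma finrank_lt_of_lt {p q : Submodule F V} (h : p < q) [FiniteDimensional F q] :
    finrank F p < finrank F q := by
  rw [← LinearEquiv.finrank_eq (Submodule.comapSubtypeEquivOfLe h.le)]
  refine Submodule.finrank_lt ?_
  intro htop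
  rw [Submodule.comap_subtype_eq_top] at htop
  exact h.not_ge htop

/-- A nonzero vector in the kernel of a nilpotent operator stabilizing a
nonzero submodule. -/
lemma kernel_vec (W : Submodule F V) (hW : W ≠ ⊥) (x : Module.End F V)
    (hx : IsNilpotent x) (hinv : ∀ v ∈ W, x v ∈ W) :
    ∃ w, w ∈ W ∧ w ≠ 0 ∧ x w = 0 := by
  classical
  obtain ⟨nn, hnn⟩ := hx
  have hex : ∃ k, ∀ w ∈ W, (x^k) w = 0 := ⟨nn, fun w _ => by rw [hnn]; rfl⟩
  set k := Nat.find hex with hkdef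
  have hk : ∀ w ∈ W, (x^k) w = 0 := Nat.find_spec hex
  have hpowinv : ∀ j, ∀ v ∈ W, (x^j) v ∈ W := by
    intro j
    induction j with
    | zero => intro v hv; simpa using hv
    | succ j ih =>
        intro v hv
        rw [pow_succ, Module.End.mul_apply]
        exact ih _ (hinv v hv)
  have hkpos : k ≠ 0 := by
    intro h0
    obtain ⟨w, hwW, hw0⟩ := (Submodule.ne_bot_iff W).mp hW
    have := hk w hwW
    rw [h0, pow_zero] at this
    exact hw0 (by simpa using this)
  have hlt : k - 1 < k := by omega
  have hmin := Nat.find_min hex hlt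
  push_neg at hmin
  obtain ⟨w', hw'W, hne⟩ := hmin
  refine ⟨(x^(k-1)) w', hpowinv _ _ hw'W, hne, ?_⟩
  have : x ((x^(k-1)) w') = (x^(k-1+1)) w' := by
    rw [pow_succ', Module.End.mul_apply]
  rw [this]
  have : k - 1 + 1 = k := by omega
  rw [this]
  exact hk _ hw'W

end Helpers



section Ops
variable {V : Type*} [AddCommGroup V] [Module F V]

/-- Commutator with `h`, as a map between submodules of endomorphisms. -/
def brk (h : Module.End F V) {P Q : Submodule F (Module.End F V)}
    (hPQ : ∀ x ∈ P, h * x - x * h ∈ Q) : ↥P →ₗ[F] ↥Q where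
  toFun x := ⟨h * ↑x - ↑x * h, hPQ _ x.2⟩
  map_add' x y := Subtype.ext (by simp [mul_add, add_mul]; abel)
  map_smul' c x := Subtype.ext (by simp [mul_smul_comm, smul_mul_assoc, smul_sub])

/-- Anticommutator with `z`, as a map between submodules of endomorphisms. -/
def abrk (z : Module.End F V) {P Q : Submodule F (Module.End F V)}
    (hPQ : ∀ x ∈ P, z * x + x * z ∈ Q) : ↥P →ₗ[F] ↥Q where
  toFun x := ⟨z * ↑x + ↑x * z, hPQ _ x.2⟩
  map_add' x y := Subtype.ext (by simp [mul_add, add_mul]; abel)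
  map_smul' c x := Subtype.ext (by simp [mul_smul_comm, smul_mul_assoc, smul_add])

@[simp] lemma brk_coe (h : Module.End F V) {P Q : Submodule F (Module.End F V)}
    (hPQ : ∀ x ∈ P, h * x - x * h ∈ Q) (x : ↥P) :
    (brk h hPQ x : Module.End F V) = h * ↑x - ↑x * h := rfl

@[simp] lemma abrk_coe (z : Module.End F V) {P Q : Submodule F (Module.End F V)}
    (hPQ : ∀ x ∈ P, z * x + x * z ∈ Q) (x : ↥P) :
    (abrk z hPQ x : Module.End F V) = z * ↑x + ↑x * z := rfl

variable (G0 G1 : Submodule F (Module.End F V))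
variable (H0' : Submodule F ↥G0) (H1' : Submodule F ↥G1)

/-- The "even" induced operator on `(G0/H0') × (G1/H1')`. -/
def evenOp (h : Module.End F V)
    (p0 : ∀ x ∈ G0, h*x - x*h ∈ G0) (p1 : ∀ x : ↥G0, x ∈ H0' → brk h p0 x ∈ H0')
    (q0 : ∀ y ∈ G1, h*y - y*h ∈ G1) (q1 : ∀ y : ↥G1, y ∈ H1' → brk h q0 y ∈ H1') :
    Module.End F ((↥G0 ⧸ H0') × (↥G1 ⧸ H1')) :=
  LinearMap.prodMap (Submodule.mapQ H0' H0' (brk h p0) p1)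
    (Submodule.mapQ H1' H1' (brk h q0) q1)

/-- The "odd" induced operator on `(G0/H0') × (G1/H1')`. -/
def oddOp (z : Module.End F V)
    (p0 : ∀ y ∈ G1, z*y + y*z ∈ G0) (p1 : ∀ y : ↥G1, y ∈ H1' → abrk z p0 y ∈ H0')
    (q0 : ∀ x ∈ G0, z*x - x*z ∈ G1) (q1 : ∀ x : ↥G0, x ∈ H0' → brk z q0 x ∈ H1') :
    Module.End F ((↥G0 ⧸ H0') × (↥G1 ⧸ H1')) :=
  LinearMap.prod
    ((Submodule.mapQ H1' H0' (abrk z p0) p1).comp (LinearMap.snd F _ _))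
    ((Submodule.mapQ H0' H1' (brk z q0) q1).comp (LinearMap.fst F _ _))

@[simp] lemma evenOp_apply (h : Module.End F V) (p0) (p1) (q0) (q1) (x : ↥G0) (y : ↥G1) :
    evenOp G0 G1 H0' H1' h p0 p1 q0 q1 (Submodule.Quotient.mk x, Submodule.Quotient.mk y)
      = (Submodule.Quotient.mk (brk h p0 x), Submodule.Quotient.mk (brk h q0 y)) := by
  simp [evenOp, Submodule.mapQ_apply]

@[simp] lemma oddOp_apply (z : Module.End F V) (p0) (p1) (q0) (q1) (x : ↥G0) (y : ↥G1) :
    oddOp G0 G1 H0' H1' z p0 p1 q0 q1 (Submodule.Quotient.mk x, Submodule.Quotient.mk y)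
      = (Submodule.Quotient.mk (abrk z p0 y), Submodule.Quotient.mk (brk z q0 x)) := by
  simp [oddOp, Submodule.mapQ_apply]


end Ops

section Ops2

variable {V : Type*} [AddCommGroup V] [Module F V]
variable (G0 G1 : Submodule F (Module.End F V))
variable (H0' : Submodule F ↥G0) (H1' : Submodule F ↥G1)

lemma evenOp_add (h k : Module.End F V) (p0h) (p1h) (q0h) (q1h) (p0k) (p1k) (q0k) (q1k)
    (p0hk) (p1hk) (q0hk) (q1hk) :
    evenOp G0 G1 H0' H1' (h+k) p0hk p1hk q0hk q1hk
      = evenOp G0 G1 H0' H1' h p0h p1h q0h q1h + evenOp G0 G1 H0' H1' k p0k p1k q0k q1k := by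
  apply LinearMap.ext; rintro ⟨q0, q1⟩
  obtain ⟨x, rfl⟩ := Submodule.Quotient.mk_surjective _ q0
  obtain ⟨y, rfl⟩ := Submodule.Quotient.mk_surjective _ q1
  simp only [LinearMap.add_apply, evenOp_apply, Prod.mk_add_mk, Prod.mk.injEq]
  constructor <;> · rw [← Submodule.Quotient.mk_add]; congr 1; apply Subtype.ext
                    simp only [brk_coe, Submodule.coe_add]; noncomm_ring

lemma evenOp_smul (c : F) (h : Module.End F V) (p0h) (p1h) (q0h) (q1h) (p0c) (p1c) (q0c) (q1c) :
    evenOp G0 G1 H0' H1' (c • h) p0c p1c q0c q1c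
      = c • evenOp G0 G1 H0' H1' h p0h p1h q0h q1h := by
  apply LinearMap.ext; rintro ⟨q0, q1⟩
  obtain ⟨x, rfl⟩ := Submodule.Quotient.mk_surjective _ q0
  obtain ⟨y, rfl⟩ := Submodule.Quotient.mk_surjective _ q1
  simp only [LinearMap.smul_apply, evenOp_apply, Prod.smul_mk, Prod.mk.injEq]
  constructor <;> · rw [← Submodule.Quotient.mk_smul]; congr 1; apply Subtype.ext
                    simp only [brk_coe, SetLike.val_smul, smul_mul_assoc, mul_smul_comm,
                      smul_sub]

lemma oddOp_add (h k : Module.End F V) (p0h) (p1h) (q0h) (q1h) (p0k) (p1k) (q0k) (q1k)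
    (p0hk) (p1hk) (q0hk) (q1hk) :
    oddOp G0 G1 H0' H1' (h+k) p0hk p1hk q0hk q1hk
      = oddOp G0 G1 H0' H1' h p0h p1h q0h q1h + oddOp G0 G1 H0' H1' k p0k p1k q0k q1k := by
  apply LinearMap.ext; rintro ⟨q0, q1⟩
  obtain ⟨x, rfl⟩ := Submodule.Quotient.mk_surjective _ q0
  obtain ⟨y, rfl⟩ := Submodule.Quotient.mk_surjective _ q1
  simp only [LinearMap.add_apply, oddOp_apply, Prod.mk_add_mk, Prod.mk.injEq]
  constructor
  · rw [← Submodule.Quotient.mk_add]; congr 1; apply Subtype.ext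
    simp only [abrk_coe, Submodule.coe_add]; noncomm_ring
  · rw [← Submodule.Quotient.mk_add]; congr 1; apply Subtype.ext
    simp only [brk_coe, Submodule.coe_add]; noncomm_ring

lemma oddOp_smul (c : F) (h : Module.End F V) (p0h) (p1h) (q0h) (q1h) (p0c) (p1c) (q0c) (q1c) :
    oddOp G0 G1 H0' H1' (c • h) p0c p1c q0c q1c
      = c • oddOp G0 G1 H0' H1' h p0h p1h q0h q1h := by
  apply LinearMap.ext; rintro ⟨q0, q1⟩
  obtain ⟨x, rfl⟩ := Submodule.Quotient.mk_surjective _ q0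
  obtain ⟨y, rfl⟩ := Submodule.Quotient.mk_surjective _ q1
  simp only [LinearMap.smul_apply, oddOp_apply, Prod.smul_mk, Prod.mk.injEq]
  constructor
  · rw [← Submodule.Quotient.mk_smul]; congr 1; apply Subtype.ext
    simp only [abrk_coe, SetLike.val_smul, smul_mul_assoc, mul_smul_comm, smul_add]
  · rw [← Submodule.Quotient.mk_smul]; congr 1; apply Subtype.ext
    simp only [brk_coe, SetLike.val_smul, smul_mul_assoc, mul_smul_comm, smul_sub]

lemma evenOp_comm (h k : Module.End F V) (p0h) (p1h) (q0h) (q1h) (p0k) (p1k) (q0k) (q1k)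
    (p0hk) (p1hk) (q0hk) (q1hk) :
    evenOp G0 G1 H0' H1' h p0h p1h q0h q1h * evenOp G0 G1 H0' H1' k p0k p1k q0k q1k
      - evenOp G0 G1 H0' H1' k p0k p1k q0k q1k * evenOp G0 G1 H0' H1' h p0h p1h q0h q1h
      = evenOp G0 G1 H0' H1' (h*k - k*h) p0hk p1hk q0hk q1hk := by
  apply LinearMap.ext; rintro ⟨q0, q1⟩
  obtain ⟨x, rfl⟩ := Submodule.Quotient.mk_surjective _ q0
  obtain ⟨y, rfl⟩ := Submodule.Quotient.mk_surjective _ q1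
  simp only [LinearMap.sub_apply, Module.End.mul_apply, evenOp_apply, Prod.mk_sub_mk,
    Prod.mk.injEq]
  constructor <;> · rw [← Submodule.Quotient.mk_sub]; congr 1; apply Subtype.ext
                    simp only [brk_coe, AddSubgroupClass.coe_sub]; noncomm_ring

lemma evenOp_oddOp_comm (h z : Module.End F V) (p0h) (p1h) (q0h) (q1h) (p0z) (p1z) (q0z) (q1z)
    (p0hz) (p1hz) (q0hz) (q1hz) :
    evenOp G0 G1 H0' H1' h p0h p1h q0h q1h * oddOp G0 G1 H0' H1' z p0z p1z q0z q1z
      - oddOp G0 G1 H0' H1' z p0z p1z q0z q1z * evenOp G0 G1 H0' H1' h p0h p1h q0h q1h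
      = oddOp G0 G1 H0' H1' (h*z - z*h) p0hz p1hz q0hz q1hz := by
  apply LinearMap.ext; rintro ⟨q0, q1⟩
  obtain ⟨x, rfl⟩ := Submodule.Quotient.mk_surjective _ q0
  obtain ⟨y, rfl⟩ := Submodule.Quotient.mk_surjective _ q1
  simp only [LinearMap.sub_apply, Module.End.mul_apply, evenOp_apply, oddOp_apply,
    Prod.mk_sub_mk, Prod.mk.injEq]
  constructor
  · rw [← Submodule.Quotient.mk_sub]; congr 1; apply Subtype.ext
    simp only [brk_coe, abrk_coe, AddSubgroupClass.coe_sub]; noncomm_ring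
  · rw [← Submodule.Quotient.mk_sub]; congr 1; apply Subtype.ext
    simp only [brk_coe, abrk_coe, AddSubgroupClass.coe_sub]; noncomm_ring

lemma oddOp_acomm (z w : Module.End F V) (p0z) (p1z) (q0z) (q1z) (p0w) (p1w) (q0w) (q1w)
    (p0zw) (p1zw) (q0zw) (q1zw) :
    oddOp G0 G1 H0' H1' z p0z p1z q0z q1z * oddOp G0 G1 H0' H1' w p0w p1w q0w q1w
      + oddOp G0 G1 H0' H1' w p0w p1w q0w q1w * oddOp G0 G1 H0' H1' z p0z p1z q0z q1z
      = evenOp G0 G1 H0' H1' (z*w + w*z) p0zw p1zw q0zw q1zw := by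
  apply LinearMap.ext; rintro ⟨q0, q1⟩
  obtain ⟨x, rfl⟩ := Submodule.Quotient.mk_surjective _ q0
  obtain ⟨y, rfl⟩ := Submodule.Quotient.mk_surjective _ q1
  simp only [LinearMap.add_apply, Module.End.mul_apply, evenOp_apply, oddOp_apply,
    Prod.mk_add_mk, Prod.mk.injEq]
  constructor <;> · rw [← Submodule.Quotient.mk_add]; congr 1; apply Subtype.ext
                    simp only [brk_coe, abrk_coe, Submodule.coe_add]; noncomm_ring

lemma oddOp_sq (z : Module.End F V) (p0z) (p1z) (q0z) (q1z) (p0s) (p1s) (q0s) (q1s) :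
    oddOp G0 G1 H0' H1' z p0z p1z q0z q1z * oddOp G0 G1 H0' H1' z p0z p1z q0z q1z
      = evenOp G0 G1 H0' H1' (z*z) p0s p1s q0s q1s := by
  apply LinearMap.ext; rintro ⟨q0, q1⟩
  obtain ⟨x, rfl⟩ := Submodule.Quotient.mk_surjective _ q0
  obtain ⟨y, rfl⟩ := Submodule.Quotient.mk_surjective _ q1
  simp only [Module.End.mul_apply, evenOp_apply, oddOp_apply, Prod.mk.injEq]
  constructor <;> · congr 1; apply Subtype.ext
                    simp only [brk_coe, abrk_coe]; noncomm_ring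

def evenMap (H : Submodule F (Module.End F V))
    (hA : ∀ h ∈ H, ∀ x ∈ G0, h*x - x*h ∈ G0)
    (hA' : ∀ (h : ↥H), ∀ x : ↥G0, x ∈ H0' →
      brk (h : Module.End F V) (fun x hx => hA _ h.2 x hx) x ∈ H0')
    (hB : ∀ h ∈ H, ∀ y ∈ G1, h*y - y*h ∈ G1)
    (hB' : ∀ (h : ↥H), ∀ y : ↥G1, y ∈ H1' →
      brk (h : Module.End F V) (fun y hy => hB _ h.2 y hy) y ∈ H1') :
    ↥H →ₗ[F] Module.End F ((↥G0 ⧸ H0') × (↥G1 ⧸ H1')) where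
  toFun h := evenOp G0 G1 H0' H1' ↑h (fun x hx => hA _ h.2 x hx) (hA' h)
      (fun y hy => hB _ h.2 y hy) (hB' h)
  map_add' h k :=
    evenOp_add G0 G1 H0' H1' ↑h ↑k _ (hA' h) _ (hB' h) _ (hA' k) _ (hB' k)
      _ (hA' (h+k)) _ (hB' (h+k))
  map_smul' c h :=
    evenOp_smul G0 G1 H0' H1' c ↑h _ (hA' h) _ (hB' h) _ (hA' (c•h)) _ (hB' (c•h))

def oddMap (H : Submodule F (Module.End F V))
    (hC : ∀ z ∈ H, ∀ y ∈ G1, z*y + y*z ∈ G0)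
    (hC' : ∀ (z : ↥H), ∀ y : ↥G1, y ∈ H1' →
      abrk (z : Module.End F V) (fun y hy => hC _ z.2 y hy) y ∈ H0')
    (hD : ∀ z ∈ H, ∀ x ∈ G0, z*x - x*z ∈ G1)
    (hD' : ∀ (z : ↥H), ∀ x : ↥G0, x ∈ H0' →
      brk (z : Module.End F V) (fun x hx => hD _ z.2 x hx) x ∈ H1') :
    ↥H →ₗ[F] Module.End F ((↥G0 ⧸ H0') × (↥G1 ⧸ H1')) where
  toFun z := oddOp G0 G1 H0' H1' ↑z (fun y hy => hC _ z.2 y hy) (hC' z)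
      (fun x hx => hD _ z.2 x hx) (hD' z)
  map_add' z w :=
    oddOp_add G0 G1 H0' H1' ↑z ↑w _ (hC' z) _ (hD' z) _ (hC' w) _ (hD' w)
      _ (hC' (z+w)) _ (hD' (z+w))
  map_smul' c z :=
    oddOp_smul G0 G1 H0' H1' c ↑z _ (hC' z) _ (hD' z) _ (hC' (c•z)) _ (hD' (c•z))

end Ops2

universe u


section PowLemma
variable {V : Type*} [AddCommGroup V] [Module F V]
variable (G0 G1 : Submodule F (Module.End F V))
variable (H0' : Submodule F ↥G0) (H1' : Submodule F ↥G1)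

lemma evenOp_pow_apply (h : Module.End F V) (p0) (p1) (q0) (q1) (m : ℕ) (x : ↥G0) (y : ↥G1) :
    ((evenOp G0 G1 H0' H1' h p0 p1 q0 q1)^m) (Submodule.Quotient.mk x, Submodule.Quotient.mk y)
      = (Submodule.Quotient.mk (((brk h p0 : ↥G0 →ₗ[F] ↥G0)^m) x),
         Submodule.Quotient.mk (((brk h q0 : ↥G1 →ₗ[F] ↥G1)^m) y)) := by
  induction m with
  | zero => simp
  | succ m ih =>
      rw [pow_succ', Module.End.mul_apply, ih]
      rw [evenOp_apply]
      congr 1 <;> rw [pow_succ', Module.End.mul_apply]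

lemma brk_pow_coe {P : Submodule F (Module.End F V)}
    (h : Module.End F V) (p0 : ∀ x ∈ P, h*x - x*h ∈ P) (m : ℕ) (x : ↥P) :
    (((brk h p0 : ↥P →ₗ[F] ↥P)^m) x : Module.End F V)
      = ((LinearMap.mulLeft F h - LinearMap.mulRight F h)^m) ↑x := by
  induction m with
  | zero => simp
  | succ m ih =>
      rw [pow_succ', pow_succ', Module.End.mul_apply, Module.End.mul_apply, brk_coe, ih]
      simp

end PowLemma

section CK
variable {V : Type u} [AddCommGroup V] [Module F V]

set_option maxHeartbeats 1600000 in
theorem ck (h2 : (2:F) ≠ 0) :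
    ∀ (n : ℕ), ∀ {V : Type u} [AddCommGroup V] [Module F V] [Nontrivial V]
      (G0 G1 : Submodule F (Module.End F V)),
      FiniteDimensional F G0 → FiniteDimensional F G1 →
      (∀ a ∈ G0, ∀ b ∈ G0, a*b - b*a ∈ G0) →
      (∀ a ∈ G0, ∀ z ∈ G1, a*z - z*a ∈ G1) →
      (∀ z ∈ G1, ∀ w ∈ G1, z*w + w*z ∈ G0) →
      (∀ a ∈ G0, IsNilpotent a) →
      finrank F ↥G0 + finrank F ↥G1 ≤ n →
      ∃ v : V, v ≠ 0 ∧ (∀ s ∈ G0, s v = 0) ∧ (∀ s ∈ G1, s v = 0) := by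
  intro n
  induction n with
  | zero =>
      intro V _ _ _ G0 G1 f0 f1 _ _ _ _ hmu
      obtain ⟨v, hv⟩ := exists_ne (0 : V)
      have hG0 : G0 = ⊥ := by
        have : finrank F ↥G0 = 0 := by omega
        exact (Submodule.finrank_eq_zero (R := F)).mp this
      have hG1 : G1 = ⊥ := by
        have : finrank F ↥G1 = 0 := by omega
        exact (Submodule.finrank_eq_zero (R := F)).mp this
      refine ⟨v, hv, ?_, ?_⟩ <;> intro s hs
      · rw [hG0, Submodule.mem_bot] at hs; simp [hs]
      · rw [hG1, Submodule.mem_bot] at hs; simp [hs]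
  | succ n IH =>
      intro V _ _ _ G0 G1 f0 f1 c00 c01 c11 hnil hmu
      by_cases hbot : G0 = ⊥ ∧ G1 = ⊥
      · obtain ⟨v, hv⟩ := exists_ne (0 : V)
        refine ⟨v, hv, ?_, ?_⟩ <;> intro s hs
        · rw [hbot.1, Submodule.mem_bot] at hs; simp [hs]
        · rw [hbot.2, Submodule.mem_bot] at hs; simp [hs]
      -- nilpotency of odd elements
      have hnil1 : ∀ z ∈ G1, IsNilpotent z := by
        intro z hz
        refine isNilpotent_of_sq (hnil _ (sq_mem_of_acomm h2 (c11 z hz z hz)))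
      -- the collection of proper subalgebra pairs
      set P : Submodule F (Module.End F V) → Submodule F (Module.End F V) → Prop :=
        fun H0 H1 =>
          H0 ≤ G0 ∧ H1 ≤ G1 ∧ (∀ a ∈ H0, ∀ b ∈ H0, a*b - b*a ∈ H0) ∧
          (∀ a ∈ H0, ∀ z ∈ H1, a*z - z*a ∈ H1) ∧
          (∀ z ∈ H1, ∀ w ∈ H1, z*w + w*z ∈ H0) ∧ ¬(H0 = G0 ∧ H1 = G1) with hPdef
      have hPbot : P ⊥ ⊥ := by
        refine ⟨bot_le, bot_le, ?_, ?_, ?_, ?_⟩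
        · intro a ha; rw [Submodule.mem_bot] at ha; subst ha; simp
        · intro a ha; rw [Submodule.mem_bot] at ha; subst ha; simp
        · intro a ha; rw [Submodule.mem_bot] at ha; subst ha; simp
        · rintro ⟨h0, h1⟩; exact hbot ⟨h0.symm, h1.symm⟩
      set D : Set ℕ := {m | ∃ H0 H1, P H0 H1 ∧ finrank F ↥H0 + finrank F ↥H1 = m} with hDdef
      have hDne : D.Nonempty := ⟨_, ⊥, ⊥, hPbot, rfl⟩
      have hDbdd : BddAbove D := by
        refine ⟨finrank F ↥G0 + finrank F ↥G1, ?_⟩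
        rintro m ⟨H0, H1, hP, rfl⟩
        haveI := fd_of_le hP.1
        haveI := fd_of_le hP.2.1
        exact Nat.add_le_add (finrank_le_of_le hP.1) (finrank_le_of_le hP.2.1)
      obtain ⟨H0, H1, hP, hmax⟩ : ∃ H0 H1, P H0 H1 ∧
          ∀ K0 K1, P K0 K1 → finrank F ↥K0 + finrank F ↥K1 ≤ finrank F ↥H0 + finrank F ↥H1 := by
        obtain ⟨H0, H1, hP, hm⟩ := Nat.sSup_mem hDne hDbdd
        exact ⟨H0, H1, hP, fun K0 K1 hK => by
          rw [hm]; exact le_csSup hDbdd ⟨K0, K1, hK, rfl⟩⟩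
      obtain ⟨hle0, hle1, hc00, hc01, hc11, hprop⟩ := hP
      haveI fdH0 : FiniteDimensional F ↥H0 := fd_of_le hle0
      haveI fdH1 : FiniteDimensional F ↥H1 := fd_of_le hle1
      -- strict dimension bound for the maximal pair
      have hmulm : finrank F ↥H0 + finrank F ↥H1 ≤ n := by
        have hstrict : finrank F ↥H0 + finrank F ↥H1 < finrank F ↥G0 + finrank F ↥G1 := by
          rcases (not_and_or.mp hprop) with h | h
          · have : H0 < G0 := lt_of_le_of_ne hle0 h
            have := finrank_lt_of_lt this
            have h2' := finrank_le_of_le hle1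
            omega
          · have : H1 < G1 := lt_of_le_of_ne hle1 h
            have := finrank_lt_of_lt this
            have h2' := finrank_le_of_le hle0
            omega
        omega
      classical
      set H0' : Submodule F ↥G0 := H0.comap G0.subtype with hH0'def
      set H1' : Submodule F ↥G1 := H1.comap G1.subtype with hH1'def
      have hA0 : ∀ h ∈ H0, ∀ x ∈ G0, h*x - x*h ∈ G0 := fun h hh x hx => c00 _ (hle0 hh) x hx
      have hA0' : ∀ (h : ↥H0), ∀ x : ↥G0, x ∈ H0' →
          brk (h : Module.End F V) (fun x hx => hA0 _ h.2 x hx) x ∈ H0' :=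
        fun h x hx => hc00 _ h.2 _ hx
      have hB0 : ∀ h ∈ H0, ∀ y ∈ G1, h*y - y*h ∈ G1 := fun h hh y hy => c01 _ (hle0 hh) y hy
      have hB0' : ∀ (h : ↥H0), ∀ y : ↥G1, y ∈ H1' →
          brk (h : Module.End F V) (fun y hy => hB0 _ h.2 y hy) y ∈ H1' :=
        fun h y hy => hc01 _ h.2 _ hy
      have hC1 : ∀ z ∈ H1, ∀ y ∈ G1, z*y + y*z ∈ G0 := fun z hz y hy => c11 _ (hle1 hz) y hy
      have hC1' : ∀ (z : ↥H1), ∀ y : ↥G1, y ∈ H1' →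
          abrk (z : Module.End F V) (fun y hy => hC1 _ z.2 y hy) y ∈ H0' :=
        fun z y hy => hc11 _ z.2 _ hy
      have hD1 : ∀ z ∈ H1, ∀ x ∈ G0, z*x - x*z ∈ G1 := by
        intro z hz x hx
        have h := G1.neg_mem (c01 x hx z (hle1 hz)); rwa [neg_sub] at h
      have hD1' : ∀ (z : ↥H1), ∀ x : ↥G0, x ∈ H0' →
          brk (z : Module.End F V) (fun x hx => hD1 _ z.2 x hx) x ∈ H1' := by
        intro z x hx
        have h := H1.neg_mem (hc01 _ hx _ z.2)
        rw [neg_sub] at h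
        exact h
      set Dmap := evenMap G0 G1 H0' H1' H0 hA0 hA0' hB0 hB0' with hDdef
      set Smap := oddMap G0 G1 H0' H1' H1 hC1 hC1' hD1 hD1' with hSdef
      have hDeq : ∀ h : ↥H0, Dmap h = evenOp G0 G1 H0' H1' ↑h
          (fun x hx => hA0 _ h.2 x hx) (hA0' h) (fun y hy => hB0 _ h.2 y hy) (hB0' h) :=
        fun _ => rfl
      have hSeq : ∀ z : ↥H1, Smap z = oddOp G0 G1 H0' H1' ↑z
          (fun y hy => hC1 _ z.2 y hy) (hC1' z) (fun x hx => hD1 _ z.2 x hx) (hD1' z) :=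
        fun _ => rfl
      have Dapp : ∀ (h : ↥H0) (x : ↥G0) (y : ↥G1),
          Dmap h (Submodule.Quotient.mk x, Submodule.Quotient.mk y)
            = (Submodule.Quotient.mk (brk (↑h) (fun x hx => hA0 _ h.2 x hx) x),
               Submodule.Quotient.mk (brk (↑h) (fun y hy => hB0 _ h.2 y hy) y)) :=
        fun h x y => evenOp_apply G0 G1 H0' H1' ↑h _ (hA0' h) _ (hB0' h) x y
      have Sapp : ∀ (z : ↥H1) (x : ↥G0) (y : ↥G1),
          Smap z (Submodule.Quotient.mk x, Submodule.Quotient.mk y)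
            = (Submodule.Quotient.mk (abrk (↑z) (fun y hy => hC1 _ z.2 y hy) y),
               Submodule.Quotient.mk (brk (↑z) (fun x hx => hD1 _ z.2 x hx) x)) :=
        fun z x y => oddOp_apply G0 G1 H0' H1' ↑z _ (hC1' z) _ (hD1' z) x y
      have hRc00 : ∀ α ∈ LinearMap.range Dmap, ∀ β ∈ LinearMap.range Dmap,
          α*β - β*α ∈ LinearMap.range Dmap := by
        rintro _ ⟨h, rfl⟩ _ ⟨k, rfl⟩
        refine ⟨⟨↑h*↑k - ↑k*↑h, hc00 _ h.2 _ k.2⟩, ?_⟩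
        exact (evenOp_comm G0 G1 H0' H1' ↑h ↑k _ (hA0' h) _ (hB0' h) _ (hA0' k) _ (hB0' k)
          _ (hA0' ⟨_, hc00 _ h.2 _ k.2⟩) _ (hB0' ⟨_, hc00 _ h.2 _ k.2⟩)).symm
      have hRc01 : ∀ α ∈ LinearMap.range Dmap, ∀ β ∈ LinearMap.range Smap,
          α*β - β*α ∈ LinearMap.range Smap := by
        rintro _ ⟨h, rfl⟩ _ ⟨z, rfl⟩
        refine ⟨⟨↑h*↑z - ↑z*↑h, hc01 _ h.2 _ z.2⟩, ?_⟩
        exact (evenOp_oddOp_comm G0 G1 H0' H1' ↑h ↑z _ (hA0' h) _ (hB0' h) _ (hC1' z) _ (hD1' z)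
          _ (hC1' ⟨_, hc01 _ h.2 _ z.2⟩) _ (hD1' ⟨_, hc01 _ h.2 _ z.2⟩)).symm
      have hRc11 : ∀ α ∈ LinearMap.range Smap, ∀ β ∈ LinearMap.range Smap,
          α*β + β*α ∈ LinearMap.range Dmap := by
        rintro _ ⟨z, rfl⟩ _ ⟨w, rfl⟩
        refine ⟨⟨↑z*↑w + ↑w*↑z, hc11 _ z.2 _ w.2⟩, ?_⟩
        exact (oddOp_acomm G0 G1 H0' H1' ↑z ↑w _ (hC1' z) _ (hD1' z) _ (hC1' w) _ (hD1' w)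
          _ (hA0' ⟨_, hc11 _ z.2 _ w.2⟩) _ (hB0' ⟨_, hc11 _ z.2 _ w.2⟩)).symm
      have hDnil : ∀ h : ↥H0, IsNilpotent (Dmap h) := by
        intro h
        obtain ⟨m, hm⟩ := isNilpotent_adEnd (F := F) (hnil _ (hle0 h.2))
        refine ⟨m, ?_⟩
        apply LinearMap.ext; rintro ⟨q0, q1⟩
        obtain ⟨x, rfl⟩ := Submodule.Quotient.mk_surjective _ q0
        obtain ⟨y, rfl⟩ := Submodule.Quotient.mk_surjective _ q1
        have hx0 : (((brk (↑h) (fun x hx => hA0 _ h.2 x hx) : ↥G0 →ₗ[F] ↥G0)^m) x) = 0 := by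
          apply Subtype.ext; rw [brk_pow_coe, hm]; simp
        have hy0 : (((brk (↑h) (fun y hy => hB0 _ h.2 y hy) : ↥G1 →ₗ[F] ↥G1)^m) y) = 0 := by
          apply Subtype.ext; rw [brk_pow_coe, hm]; simp
        rw [hDeq h, evenOp_pow_apply, hx0, hy0]
        simp
      have hSnil : ∀ z : ↥H1, IsNilpotent (Smap z) := by
        intro z
        have hzzH : ((z : Module.End F V) * ↑z) ∈ H0 := sq_mem_of_acomm h2 (hc11 _ z.2 _ z.2)
        have hsq : Smap z * Smap z = Dmap ⟨↑z*↑z, hzzH⟩ := by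
          rw [hSeq z, hDeq ⟨↑z*↑z, hzzH⟩]
          exact oddOp_sq G0 G1 H0' H1' ↑z _ (hC1' z) _ (hD1' z)
            _ (hA0' ⟨_, hzzH⟩) _ (hB0' ⟨_, hzzH⟩)
        obtain ⟨m, hm⟩ := hDnil ⟨↑z*↑z, hzzH⟩
        refine ⟨2*m, ?_⟩
        rw [pow_mul, pow_two, hsq, hm]
      haveI hQnt : Nontrivial ((↥G0 ⧸ H0') × (↥G1 ⧸ H1')) := by
        rcases not_and_or.mp hprop with hne | hne
        · obtain ⟨x, hxG, hxH⟩ := SetLike.exists_of_lt (lt_of_le_of_ne hle0 hne)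
          refine ⟨(Submodule.Quotient.mk ⟨x, hxG⟩, 0), 0, fun hcon => hxH ?_⟩
          have := congrArg Prod.fst hcon
          exact (by simpa [Submodule.Quotient.mk_eq_zero] using this : (⟨x, hxG⟩ : ↥G0) ∈ H0')
        · obtain ⟨y, hyG, hyH⟩ := SetLike.exists_of_lt (lt_of_le_of_ne hle1 hne)
          refine ⟨(0, Submodule.Quotient.mk ⟨y, hyG⟩), 0, fun hcon => hyH ?_⟩
          have := congrArg Prod.snd hcon
          exact (by simpa [Submodule.Quotient.mk_eq_zero] using this : (⟨y, hyG⟩ : ↥G1) ∈ H1')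
      haveI fdD : FiniteDimensional F ↥(LinearMap.range Dmap) :=
        Module.Finite.of_surjective Dmap.rangeRestrict Dmap.surjective_rangeRestrict
      haveI fdS : FiniteDimensional F ↥(LinearMap.range Smap) :=
        Module.Finite.of_surjective Smap.rangeRestrict Smap.surjective_rangeRestrict
      obtain ⟨⟨v0, v1⟩, hvne, hkill0, hkill1⟩ :=
        IH (LinearMap.range Dmap) (LinearMap.range Smap) fdD fdS hRc00 hRc01 hRc11
          (by rintro _ ⟨h, rfl⟩; exact hDnil h)
          (by
            have r0 := LinearMap.finrank_range_le Dmap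
            have r1 := LinearMap.finrank_range_le Smap
            omega)
      obtain ⟨x0, hx0⟩ := Submodule.Quotient.mk_surjective _ v0
      obtain ⟨x1, hx1⟩ := Submodule.Quotient.mk_surjective _ v1
      have key0 : ∀ h : ↥H0,
          ((h : Module.End F V)*↑x0 - ↑x0*↑h ∈ H0) ∧ ((h : Module.End F V)*↑x1 - ↑x1*↑h ∈ H1) := by
        intro h
        have hk := hkill0 (Dmap h) ⟨h, rfl⟩
        rw [← hx0, ← hx1, Dapp h x0 x1] at hk
        have h1 := congrArg Prod.fst hk
        have h2' := congrArg Prod.snd hk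
        simp only [Prod.fst_zero, Prod.snd_zero] at h1 h2'
        have hmm0 : brk (↑h) (fun x hx => hA0 _ h.2 x hx) x0 ∈ H0' :=
          (Submodule.Quotient.mk_eq_zero _).mp h1
        have hmm1 : brk (↑h) (fun y hy => hB0 _ h.2 y hy) x1 ∈ H1' :=
          (Submodule.Quotient.mk_eq_zero _).mp h2'
        exact ⟨hmm0, hmm1⟩
      have key1 : ∀ z : ↥H1,
          ((z : Module.End F V)*↑x1 + ↑x1*↑z ∈ H0) ∧ ((z : Module.End F V)*↑x0 - ↑x0*↑z ∈ H1) := by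
        intro z
        have hk := hkill1 (Smap z) ⟨z, rfl⟩
        rw [← hx0, ← hx1, Sapp z x0 x1] at hk
        have h1 := congrArg Prod.fst hk
        have h2' := congrArg Prod.snd hk
        simp only [Prod.fst_zero, Prod.snd_zero] at h1 h2'
        have hmm0 : abrk (↑z) (fun y hy => hC1 _ z.2 y hy) x1 ∈ H0' :=
          (Submodule.Quotient.mk_eq_zero _).mp h1
        have hmm1 : brk (↑z) (fun x hx => hD1 _ z.2 x hx) x0 ∈ H1' :=
          (Submodule.Quotient.mk_eq_zero _).mp h2'
        exact ⟨hmm0, hmm1⟩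
      have hv01 : v0 ≠ 0 ∨ v1 ≠ 0 := by
        by_contra hc; push_neg at hc
        exact hvne (by simp [Prod.ext_iff, hc.1, hc.2])
      obtain ⟨w', hw'ne, hwk0, hwk1⟩ :=
        IH H0 H1 fdH0 fdH1 hc00 hc01 hc11 (fun a ha => hnil a (hle0 ha)) hmulm
      set W : Submodule F V :=
        { carrier := {v | (∀ s ∈ H0, s v = 0) ∧ (∀ s ∈ H1, s v = 0)}
          add_mem' := by
            rintro a b ⟨ha0, ha1⟩ ⟨hb0, hb1⟩
            exact ⟨fun s hs => by rw [map_add, ha0 s hs, hb0 s hs, add_zero],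
                   fun s hs => by rw [map_add, ha1 s hs, hb1 s hs, add_zero]⟩
          zero_mem' := ⟨fun s _ => map_zero s, fun s _ => map_zero s⟩
          smul_mem' := by
            rintro c a ⟨ha0, ha1⟩
            exact ⟨fun s hs => by rw [map_smul, ha0 s hs, smul_zero],
                   fun s hs => by rw [map_smul, ha1 s hs, smul_zero]⟩ } with hWdef
      have hWmem : ∀ v : V, v ∈ W ↔ ((∀ s ∈ H0, s v = 0) ∧ (∀ s ∈ H1, s v = 0)) :=
        fun v => Iff.rfl
      have hWne : W ≠ ⊥ := (Submodule.ne_bot_iff W).mpr ⟨w', (hWmem w').mpr ⟨hwk0, hwk1⟩, hw'ne⟩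
      rcases hv01 with hv0 | hv1
      · -- CASE A : even witness
        have hx0notH : (x0 : Module.End F V) ∉ H0 := by
          intro hmem
          exact hv0 (by rw [← hx0, Submodule.Quotient.mk_eq_zero]; exact hmem)
        set K0 : Submodule F (Module.End F V) :=
          H0 ⊔ Submodule.span F {(x0 : Module.End F V)} with hK0def
        have hK0le : K0 ≤ G0 := sup_le hle0 ((Submodule.span_singleton_le_iff_mem _ _).mpr x0.2)
        have hK0mem : ∀ a ∈ K0, ∃ h ∈ H0, ∃ r : F, a = h + r • (x0 : Module.End F V) := by
          intro a ha
          obtain ⟨h, hh, s, hs, rfl⟩ := Submodule.mem_sup.mp ha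
          obtain ⟨r, rfl⟩ := Submodule.mem_span_singleton.mp hs
          exact ⟨h, hh, r, rfl⟩
        have hH0K : H0 ≤ K0 := le_sup_left
        have hx0K : (x0 : Module.End F V) ∈ K0 :=
          Submodule.mem_sup_right (Submodule.mem_span_singleton_self _)
        have hKc00 : ∀ a ∈ K0, ∀ b ∈ K0, a*b - b*a ∈ K0 := by
          intro a ha b hb
          obtain ⟨h, hh, r, rfl⟩ := hK0mem a ha
          obtain ⟨h', hh', r', rfl⟩ := hK0mem b hb
          rw [comm_add_add]
          refine K0.add_mem (hH0K (hc00 _ hh _ hh')) (K0.add_mem ?_ (K0.add_mem ?_ ?_))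
          · rw [comm_smul_right]
            exact K0.smul_mem _ (hH0K ((key0 ⟨h, hh⟩).1))
          · rw [comm_smul_left]
            have hmem : ((x0 : Module.End F V)*h' - h'*↑x0) ∈ H0 := by
              have := H0.neg_mem ((key0 ⟨h', hh'⟩).1); rwa [neg_sub] at this
            exact K0.smul_mem _ (hH0K hmem)
          · have hz : (r • (x0 : Module.End F V))*(r' • (x0:Module.End F V))
                - (r' • (x0:Module.End F V))*(r • (x0:Module.End F V)) = 0 := by
              rw [comm_smul_left, comm_smul_right, sub_self, smul_zero, smul_zero]
            rw [hz]; exact K0.zero_mem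
        have hKc01 : ∀ a ∈ K0, ∀ z ∈ H1, a*z - z*a ∈ H1 := by
          intro a ha z hz
          obtain ⟨h, hh, r, rfl⟩ := hK0mem a ha
          rw [comm_add_left]
          refine H1.add_mem (hc01 _ hh _ hz) ?_
          rw [comm_smul_left]
          refine H1.smul_mem _ ?_
          have := H1.neg_mem ((key1 ⟨z, hz⟩).2); rwa [neg_sub] at this
        have hKeq : K0 = G0 ∧ H1 = G1 := by
          by_contra hKprop
          have hPK : P K0 H1 :=
            ⟨hK0le, hle1, hKc00, hKc01, fun z hz w hw => hH0K (hc11 z hz w hw), hKprop⟩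
          have hle := hmax K0 H1 hPK
          haveI : FiniteDimensional F ↥K0 := fd_of_le hK0le
          have hlt : H0 < K0 :=
            lt_of_le_of_ne hH0K (fun hEq => hx0notH (by rw [hEq]; exact hx0K))
          have := finrank_lt_of_lt (F := F) hlt
          omega
        have hstab : ∀ v ∈ W, (x0 : Module.End F V) v ∈ W := by
          intro v hv
          obtain ⟨hv0', hv1'⟩ := (hWmem v).mp hv
          refine (hWmem _).mpr ⟨?_, ?_⟩
          · intro s hs
            have heq : s * (x0 : Module.End F V) = ↑x0 * s + (s*↑x0 - ↑x0*s) := by noncomm_ring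
            have h0 : (s * (x0 : Module.End F V)) v = 0 := by
              rw [heq, LinearMap.add_apply, Module.End.mul_apply, hv0' s hs, map_zero,
                hv0' _ ((key0 ⟨s, hs⟩).1), add_zero]
            rw [← Module.End.mul_apply, h0]
          · intro s hs
            have heq : s * (x0 : Module.End F V) = ↑x0 * s + (s*↑x0 - ↑x0*s) := by noncomm_ring
            have h0 : (s * (x0 : Module.End F V)) v = 0 := by
              rw [heq, LinearMap.add_apply, Module.End.mul_apply, hv1' s hs, map_zero,
                hv1' _ ((key1 ⟨s, hs⟩).2), add_zero]
            rw [← Module.End.mul_apply, h0]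
        obtain ⟨w, hwW, hwne, hxw⟩ := kernel_vec W hWne _ (hnil _ x0.2) hstab
        obtain ⟨hwH0, hwH1⟩ := (hWmem w).mp hwW
        refine ⟨w, hwne, ?_, ?_⟩
        · intro s hs
          rw [← hKeq.1] at hs
          obtain ⟨h, hh, r, rfl⟩ := hK0mem s hs
          rw [LinearMap.add_apply, hwH0 h hh, LinearMap.smul_apply, hxw, smul_zero, add_zero]
        · intro s hs
          rw [← hKeq.2] at hs
          exact hwH1 s hs
      · -- CASE B : odd witness
        have hx1notH : (x1 : Module.End F V) ∉ H1 := by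
          intro hmem
          exact hv1 (by rw [← hx1, Submodule.Quotient.mk_eq_zero]; exact hmem)
        have mA : ∀ h ∈ H0, h*(x1 : Module.End F V) - ↑x1*h ∈ H1 := fun h hh => (key0 ⟨h, hh⟩).2
        have mB : ∀ z ∈ H1, z*(x1 : Module.End F V) + ↑x1*z ∈ H0 := fun z hz => (key1 ⟨z, hz⟩).1
        have mC : ∀ h ∈ H0, ((x1 : Module.End F V)*↑x1)*h - h*(↑x1*↑x1) ∈ H0 := by
          intro h hh
          have hu : ((x1 : Module.End F V)*h - h*↑x1) ∈ H1 := by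
            have := H1.neg_mem (mA h hh); rwa [neg_sub] at this
          have h2' := mB _ hu
          have heq : ((x1 : Module.End F V)*↑x1)*h - h*(↑x1*↑x1)
              = (↑x1*h - h*↑x1)*↑x1 + ↑x1*(↑x1*h - h*↑x1) := by noncomm_ring
          rw [heq]; exact h2'
        have mD : ∀ z ∈ H1, ((x1 : Module.End F V)*↑x1)*z - z*(↑x1*↑x1) ∈ H1 := by
          intro z hz
          have hw : ((x1 : Module.End F V)*z + z*↑x1) ∈ H0 := by
            have := mB z hz; rwa [add_comm] at this
          have heq : ((x1 : Module.End F V)*↑x1)*z - z*(↑x1*↑x1)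
              = ↑x1*(↑x1*z + z*↑x1) - (↑x1*z + z*↑x1)*↑x1 := by noncomm_ring
          rw [heq]
          have := H1.neg_mem (mA _ hw); rwa [neg_sub] at this
        have hxxG0 : ((x1 : Module.End F V)*↑x1) ∈ G0 :=
          sq_mem_of_acomm h2 (c11 _ x1.2 _ x1.2)
        set K0 : Submodule F (Module.End F V) :=
          H0 ⊔ Submodule.span F {((x1 : Module.End F V)*↑x1)} with hK0def
        set K1 : Submodule F (Module.End F V) :=
          H1 ⊔ Submodule.span F {(x1 : Module.End F V)} with hK1def
        have hK0le : K0 ≤ G0 := sup_le hle0 ((Submodule.span_singleton_le_iff_mem _ _).mpr hxxG0)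
        have hK1le : K1 ≤ G1 := sup_le hle1 ((Submodule.span_singleton_le_iff_mem _ _).mpr x1.2)
        have hH0K : H0 ≤ K0 := le_sup_left
        have hH1K : H1 ≤ K1 := le_sup_left
        have hxxK : ((x1 : Module.End F V)*↑x1) ∈ K0 :=
          Submodule.mem_sup_right (Submodule.mem_span_singleton_self _)
        have hx1K : (x1 : Module.End F V) ∈ K1 :=
          Submodule.mem_sup_right (Submodule.mem_span_singleton_self _)
        have hK0mem : ∀ a ∈ K0, ∃ h ∈ H0, ∃ r : F, a = h + r • ((x1 : Module.End F V)*↑x1) := by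
          intro a ha
          obtain ⟨h, hh, s, hs, rfl⟩ := Submodule.mem_sup.mp ha
          obtain ⟨r, rfl⟩ := Submodule.mem_span_singleton.mp hs
          exact ⟨h, hh, r, rfl⟩
        have hK1mem : ∀ a ∈ K1, ∃ u ∈ H1, ∃ t : F, a = u + t • (x1 : Module.End F V) := by
          intro a ha
          obtain ⟨u, hu, s, hs, rfl⟩ := Submodule.mem_sup.mp ha
          obtain ⟨t, rfl⟩ := Submodule.mem_span_singleton.mp hs
          exact ⟨u, hu, t, rfl⟩
        have hKc00 : ∀ a ∈ K0, ∀ b ∈ K0, a*b - b*a ∈ K0 := by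
          intro a ha b hb
          obtain ⟨h, hh, r, rfl⟩ := hK0mem a ha
          obtain ⟨h', hh', r', rfl⟩ := hK0mem b hb
          rw [comm_add_add]
          refine K0.add_mem (hH0K (hc00 _ hh _ hh')) (K0.add_mem ?_ (K0.add_mem ?_ ?_))
          · rw [comm_smul_right]
            have : (h*((x1:Module.End F V)*↑x1) - ((x1:Module.End F V)*↑x1)*h) ∈ H0 := by
              have := H0.neg_mem (mC h hh); rwa [neg_sub] at this
            exact K0.smul_mem _ (hH0K this)
          · rw [comm_smul_left]
            exact K0.smul_mem _ (hH0K (mC h' hh'))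
          · have hz : (r • ((x1:Module.End F V)*↑x1))*(r' • ((x1:Module.End F V)*↑x1))
                - (r' • ((x1:Module.End F V)*↑x1))*(r • ((x1:Module.End F V)*↑x1)) = 0 := by
              rw [comm_smul_left, comm_smul_right, sub_self, smul_zero, smul_zero]
            rw [hz]; exact K0.zero_mem
        have hKc01 : ∀ a ∈ K0, ∀ z ∈ K1, a*z - z*a ∈ K1 := by
          intro a ha z hz
          obtain ⟨h, hh, r, rfl⟩ := hK0mem a ha
          obtain ⟨u, hu, t, rfl⟩ := hK1mem z hz
          rw [comm_add_add]
          refine K1.add_mem (hH1K (hc01 _ hh _ hu)) (K1.add_mem ?_ (K1.add_mem ?_ ?_))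
          · rw [comm_smul_right]
            exact K1.smul_mem _ (hH1K (mA h hh))
          · rw [comm_smul_left]
            exact K1.smul_mem _ (hH1K (mD u hu))
          · have hz0 : ((x1:Module.End F V)*↑x1)*(x1:Module.End F V)
                - (x1:Module.End F V)*((x1:Module.End F V)*↑x1) = 0 := by noncomm_ring
            have : (r • ((x1:Module.End F V)*↑x1))*(t • (x1:Module.End F V))
                - (t • (x1:Module.End F V))*(r • ((x1:Module.End F V)*↑x1)) = 0 := by
              rw [comm_smul_left, comm_smul_right, hz0, smul_zero, smul_zero]
            rw [this]; exact K1.zero_mem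
        have hKc11 : ∀ z ∈ K1, ∀ w ∈ K1, z*w + w*z ∈ K0 := by
          intro z hz w hw
          obtain ⟨u, hu, t, rfl⟩ := hK1mem z hz
          obtain ⟨u', hu', t', rfl⟩ := hK1mem w hw
          rw [acomm_add_add]
          refine K0.add_mem (hH0K (hc11 _ hu _ hu')) (K0.add_mem ?_ (K0.add_mem ?_ ?_))
          · rw [acomm_smul_right]
            exact K0.smul_mem _ (hH0K (mB u hu))
          · rw [acomm_smul_left]
            have := mB u' hu'
            rw [add_comm] at this
            exact K0.smul_mem _ (hH0K this)
          · rw [acomm_smul_left, acomm_smul_right]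
            exact K0.smul_mem _ (K0.smul_mem _ (K0.add_mem hxxK hxxK))
        have hKeq : K0 = G0 ∧ K1 = G1 := by
          by_contra hKprop
          have hPK : P K0 K1 := ⟨hK0le, hK1le, hKc00, hKc01, hKc11, hKprop⟩
          have hle := hmax K0 K1 hPK
          haveI : FiniteDimensional F ↥K0 := fd_of_le hK0le
          haveI : FiniteDimensional F ↥K1 := fd_of_le hK1le
          have hlt : H1 < K1 :=
            lt_of_le_of_ne hH1K (fun hEq => hx1notH (by rw [hEq]; exact hx1K))
          have h1 := finrank_lt_of_lt (F := F) hlt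
          have h0 := finrank_le_of_le (F := F) hH0K
          omega
        have hstab : ∀ v ∈ W, (x1 : Module.End F V) v ∈ W := by
          intro v hv
          obtain ⟨hv0', hv1'⟩ := (hWmem v).mp hv
          refine (hWmem _).mpr ⟨?_, ?_⟩
          · intro s hs
            have heq : s * (x1 : Module.End F V) = ↑x1 * s + (s*↑x1 - ↑x1*s) := by noncomm_ring
            have h0 : (s * (x1 : Module.End F V)) v = 0 := by
              rw [heq, LinearMap.add_apply, Module.End.mul_apply, hv0' s hs, map_zero,
                hv1' _ (mA s hs), add_zero]
            rw [← Module.End.mul_apply, h0]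
          · intro s hs
            have heq : s * (x1 : Module.End F V) = (s*↑x1 + ↑x1*s) - ↑x1*s := by
              rw [add_sub_cancel_right]
            have h0 : (s * (x1 : Module.End F V)) v = 0 := by
              rw [heq, LinearMap.sub_apply, hv0' _ (mB s hs), Module.End.mul_apply,
                hv1' s hs, map_zero, sub_zero]
            rw [← Module.End.mul_apply, h0]
        obtain ⟨w, hwW, hwne, hxw⟩ := kernel_vec W hWne _ (hnil1 _ x1.2) hstab
        obtain ⟨hwH0, hwH1⟩ := (hWmem w).mp hwW
        refine ⟨w, hwne, ?_, ?_⟩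
        · intro s hs
          rw [← hKeq.1] at hs
          obtain ⟨h, hh, r, rfl⟩ := hK0mem s hs
          have hxx0 : ((x1 : Module.End F V)*↑x1) w = 0 := by
            rw [Module.End.mul_apply, hxw, map_zero]
          rw [LinearMap.add_apply, hwH0 h hh, LinearMap.smul_apply, hxx0, smul_zero, add_zero]
        · intro s hs
          rw [← hKeq.2] at hs
          obtain ⟨u, hu, t, rfl⟩ := hK1mem s hs
          rw [LinearMap.add_apply, hwH1 u hu, LinearMap.smul_apply, hxw, smul_zero, add_zero]


end CK

section Qres
variable {V : Type*} [AddCommGroup V] [Module F V]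
variable (Wm : Submodule F V) (Nm : Submodule F ↥Wm)

/-- Operator induced on a subquotient. -/
def qres (s : Module.End F V) (hs : ∀ v ∈ Wm, s v ∈ Wm)
    (hs' : ∀ v : ↥Wm, v ∈ Nm → s.restrict hs v ∈ Nm) : Module.End F (↥Wm ⧸ Nm) :=
  Submodule.mapQ Nm Nm (s.restrict hs) hs'

@[simp] lemma qres_mk (s : Module.End F V) (hs) (hs') (v : ↥Wm) :
    qres Wm Nm s hs hs' (Submodule.Quotient.mk v)
      = Submodule.Quotient.mk (s.restrict hs v) :=
  Submodule.mapQ_apply _ _ _ _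

lemma qres_add (s t : Module.End F V) (hs) (hs') (ht) (ht') (hst) (hst') :
    qres Wm Nm (s+t) hst hst' = qres Wm Nm s hs hs' + qres Wm Nm t ht ht' := by
  apply LinearMap.ext; intro qv
  obtain ⟨v, rfl⟩ := Submodule.Quotient.mk_surjective _ qv
  rw [LinearMap.add_apply]
  simp only [qres_mk]
  rw [← Submodule.Quotient.mk_add]
  exact congrArg _ (Subtype.ext (by simp [LinearMap.restrict_apply]))

lemma qres_smul (c : F) (s : Module.End F V) (hs) (hs') (hcs) (hcs') :
    qres Wm Nm (c • s) hcs hcs' = c • qres Wm Nm s hs hs' := by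
  apply LinearMap.ext; intro qv
  obtain ⟨v, rfl⟩ := Submodule.Quotient.mk_surjective _ qv
  rw [LinearMap.smul_apply]
  simp only [qres_mk]
  rw [← Submodule.Quotient.mk_smul]
  exact congrArg _ (Subtype.ext (by simp [LinearMap.restrict_apply]))

lemma qres_sub (s t : Module.End F V) (hs) (hs') (ht) (ht') (hst) (hst') :
    qres Wm Nm (s-t) hst hst' = qres Wm Nm s hs hs' - qres Wm Nm t ht ht' := by
  apply LinearMap.ext; intro qv
  obtain ⟨v, rfl⟩ := Submodule.Quotient.mk_surjective _ qv
  rw [LinearMap.sub_apply]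
  simp only [qres_mk]
  rw [← Submodule.Quotient.mk_sub]
  exact congrArg _ (Subtype.ext (by simp [LinearMap.restrict_apply]))

lemma qres_mul (s t : Module.End F V) (hs) (hs') (ht) (ht') (hst) (hst') :
    qres Wm Nm (s*t) hst hst' = qres Wm Nm s hs hs' * qres Wm Nm t ht ht' := by
  apply LinearMap.ext; intro qv
  obtain ⟨v, rfl⟩ := Submodule.Quotient.mk_surjective _ qv
  rw [Module.End.mul_apply]
  simp only [qres_mk]
  exact congrArg _ (Subtype.ext (by simp [LinearMap.restrict_apply]))

lemma qres_one (hs) (hs') : qres Wm Nm 1 hs hs' = 1 := by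
  apply LinearMap.ext; intro qv
  obtain ⟨v, rfl⟩ := Submodule.Quotient.mk_surjective _ qv
  simp only [qres_mk]
  rw [Module.End.one_apply]
  exact congrArg _ (Subtype.ext (by simp [LinearMap.restrict_apply]))

lemma qres_eq_of_eq (s s' : Module.End F V) (hss : s = s') (hs) (hs') (hs2) (hs2') :
    qres Wm Nm s hs hs' = qres Wm Nm s' hs2 hs2' := by subst hss; rfl

lemma restrict_pow_coe (s : Module.End F V) (hs : ∀ v ∈ Wm, s v ∈ Wm) (m : ℕ) (v : ↥Wm) :
    (((s.restrict hs : ↥Wm →ₗ[F] ↥Wm)^m) v : V) = (s^m) ↑v := by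
  induction m with
  | zero => simp
  | succ m ih =>
      rw [pow_succ', pow_succ', Module.End.mul_apply, Module.End.mul_apply]
      rw [LinearMap.restrict_apply]
      simp [ih]

lemma qres_pow_apply (s : Module.End F V) (hs) (hs') (m : ℕ) (v : ↥Wm) :
    ((qres Wm Nm s hs hs')^m) (Submodule.Quotient.mk v)
      = Submodule.Quotient.mk (((s.restrict hs : ↥Wm →ₗ[F] ↥Wm)^m) v) := by
  induction m with
  | zero => simp
  | succ m ih =>
      rw [pow_succ', Module.End.mul_apply, ih, qres_mk, pow_succ', Module.End.mul_apply]

/-- Bundled family of subquotient operators. -/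
def qresMap (H : Submodule F (Module.End F V))
    (hp : ∀ h ∈ H, ∀ v ∈ Wm, h v ∈ Wm)
    (hp' : ∀ (h : ↥H), ∀ v : ↥Wm, v ∈ Nm →
      (h : Module.End F V).restrict (hp _ h.2) v ∈ Nm) :
    ↥H →ₗ[F] Module.End F (↥Wm ⧸ Nm) where
  toFun h := qres Wm Nm ↑h (hp _ h.2) (hp' h)
  map_add' h k := by
    apply LinearMap.ext; intro qv
    obtain ⟨v, rfl⟩ := Submodule.Quotient.mk_surjective _ qv
    rw [LinearMap.add_apply]
    simp only [qres_mk]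
    rw [← Submodule.Quotient.mk_add]
    exact congrArg _ (Subtype.ext (by simp [LinearMap.restrict_apply]))
  map_smul' c h := by
    apply LinearMap.ext; intro qv
    obtain ⟨v, rfl⟩ := Submodule.Quotient.mk_surjective _ qv
    rw [RingHom.id_apply, LinearMap.smul_apply]
    simp only [qres_mk]
    rw [← Submodule.Quotient.mk_smul]
    exact congrArg _ (Subtype.ext (by simp [LinearMap.restrict_apply]))

end Qres

section CommPow
variable {R : Type*} [Ring R]

lemma commpow {s c : R} (h : s*c = c*s ∨ s*c = -(c*s)) :
    ∀ i, s * c^i = c^i * s ∨ s * c^i = -(c^i * s) := by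
  intro i; induction i with
  | zero => left; simp
  | succ i ih =>
      rcases ih with ih | ih <;> rcases h with hh | hh
      · left; rw [pow_succ, ← mul_assoc, ih, mul_assoc, hh, ← mul_assoc]
      · right; rw [pow_succ, ← mul_assoc, ih, mul_assoc, hh, mul_neg, ← mul_assoc]
      · right; rw [pow_succ, ← mul_assoc, ih, neg_mul, mul_assoc, hh, mul_assoc]
      · left; rw [pow_succ, ← mul_assoc, ih, neg_mul, mul_assoc, hh, mul_neg, neg_neg,
          ← mul_assoc]
end CommPow

section PresRange
variable {V : Type*} [AddCommGroup V] [Module F V]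

lemma pres_range (s c : Module.End F V) (h : s*c = c*s ∨ s*c = -(c*s)) (i : ℕ) :
    ∀ v ∈ LinearMap.range (c^i), s v ∈ LinearMap.range (c^i) := by
  rintro _ ⟨u, rfl⟩
  rcases commpow h i with hh | hh
  · refine ⟨s u, ?_⟩
    have := congrArg (fun f : Module.End F V => f u) hh
    simpa [Module.End.mul_apply] using this.symm
  · refine ⟨-(s u), ?_⟩
    have := congrArg (fun f : Module.End F V => f u) hh
    simp only [Module.End.mul_apply, LinearMap.neg_apply] at this
    simp [this]
end PresRange

section Env

lemma bot_stab {V : Type*} [AddCommGroup V] [Module F V]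
    {P Q : Submodule F (Module.End F V)} (f : ↥P →ₗ[F] ↥Q) :
    ∀ x : ↥P, x ∈ (⊥ : Submodule F ↥P) → f x ∈ (⊥ : Submodule F ↥Q) := by
  intro x hx; rw [Submodule.mem_bot] at hx ⊢; rw [hx, map_zero]

lemma env_bot {V : Type*} [AddCommGroup V] [Module F V]
    (G0 G1 : Submodule F (Module.End F V)) (h0 : G0 = ⊥) (h1 : G1 = ⊥) :
    ∃ N, 0 < N ∧ ∀ l : List (Module.End F V), l.length = N →
      (∀ s ∈ l, s ∈ G0 ⊔ G1) → l.prod = 0 := by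
  refine ⟨1, one_pos, ?_⟩
  intro l hlen hmem
  obtain ⟨a, rfl⟩ := List.length_eq_one_iff.mp hlen
  have ha := hmem a (by simp)
  rw [h0, h1, sup_bot_eq, Submodule.mem_bot] at ha
  simp [ha]

/-- Filtration step: from a quasi-central nilpotent element, conclude. -/
lemma env_step {n : ℕ} {V : Type u} [AddCommGroup V] [Module F V]
    (G0 G1 : Submodule F (Module.End F V))
    (f0 : FiniteDimensional F G0) (f1 : FiniteDimensional F G1)
    (c00 : ∀ a ∈ G0, ∀ b ∈ G0, a*b - b*a ∈ G0)
    (c01 : ∀ a ∈ G0, ∀ z ∈ G1, a*z - z*a ∈ G1)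
    (c11 : ∀ z ∈ G1, ∀ w ∈ G1, z*w + w*z ∈ G0)
    (hnil : ∀ a ∈ G0, IsNilpotent a)
    (hmu : finrank F ↥G0 + finrank F ↥G1 ≤ n + 1)
    (hIH : ∀ {W : Type u} [AddCommGroup W] [Module F W]
      (K0 K1 : Submodule F (Module.End F W)),
      FiniteDimensional F K0 → FiniteDimensional F K1 →
      (∀ a ∈ K0, ∀ b ∈ K0, a*b - b*a ∈ K0) →
      (∀ a ∈ K0, ∀ z ∈ K1, a*z - z*a ∈ K1) →
      (∀ z ∈ K1, ∀ w ∈ K1, z*w + w*z ∈ K0) →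
      (∀ a ∈ K0, IsNilpotent a) →
      finrank F ↥K0 + finrank F ↥K1 ≤ n →
      ∃ N, 0 < N ∧ ∀ l : List (Module.End F W), l.length = N →
        (∀ s ∈ l, s ∈ K0 ⊔ K1) → l.prod = 0)
    (c : Module.End F V) (q : ℕ) (hq : c^q = 0) (hcne : c ≠ 0)
    (hc0 : ∀ s ∈ G0, s * c = c * s)
    (hc1 : ∀ s ∈ G1, s * c = c * s ∨ s * c = -(c * s))
    (hcmem : c ∈ G0 ∨ c ∈ G1) :
    ∃ N, 0 < N ∧ ∀ l : List (Module.End F V), l.length = N →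
      (∀ s ∈ l, s ∈ G0 ⊔ G1) → l.prod = 0 := by
  classical
  -- letters preserve the filtration
  have hpres0 : ∀ h ∈ G0, ∀ i : ℕ, ∀ v ∈ LinearMap.range (c^i), h v ∈ LinearMap.range (c^i) :=
    fun h hh i => pres_range h c (Or.inl (hc0 h hh)) i
  have hpres1 : ∀ z ∈ G1, ∀ i : ℕ, ∀ v ∈ LinearMap.range (c^i), z v ∈ LinearMap.range (c^i) :=
    fun z hz i => pres_range z c (hc1 z hz) i
  have hJpres : ∀ s ∈ G0 ⊔ G1, ∀ i : ℕ, ∀ v ∈ LinearMap.range (c^i),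
      s v ∈ LinearMap.range (c^i) := by
    intro s hs i v hv
    obtain ⟨a, ha, z, hz, rfl⟩ := Submodule.mem_sup.mp hs
    rw [LinearMap.add_apply]
    exact Submodule.add_mem _ (hpres0 a ha i v hv) (hpres1 z hz i v hv)
  have prodpres : ∀ (l : List (Module.End F V)), (∀ s ∈ l, s ∈ G0 ⊔ G1) →
      ∀ i : ℕ, ∀ v ∈ LinearMap.range (c^i), l.prod v ∈ LinearMap.range (c^i) := by
    intro l
    induction l with
    | nil => intro _ i v hv; simpa using hv
    | cons s t ih =>
        intro hmem i v hv
        rw [List.prod_cons, Module.End.mul_apply]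
        exact hJpres s (hmem s (by simp)) i _ (ih (fun r hr => hmem r (by simp [hr])) i v hv)
  -- per-level vanishing
  have keyLvl : ∀ i : ℕ, ∃ N, 0 < N ∧ ∀ l : List (Module.End F V), l.length = N →
      (∀ s ∈ l, s ∈ G0 ⊔ G1) → ∀ v ∈ LinearMap.range (c^i),
        l.prod v ∈ LinearMap.range (c^(i+1)) := by
    intro i
    set Wi : Submodule F V := LinearMap.range (c^i) with hWi
    set Ni : Submodule F ↥Wi := (LinearMap.range (c^(i+1))).comap Wi.subtype with hNi
    have hNimem : ∀ v : ↥Wi, v ∈ Ni ↔ (v : V) ∈ LinearMap.range (c^(i+1)) := fun v => Iff.rfl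
    have hp0 : ∀ h ∈ G0, ∀ v ∈ Wi, h v ∈ Wi := fun h hh => hpres0 h hh i
    have hp0' : ∀ (h : ↥G0), ∀ v : ↥Wi, v ∈ Ni →
        (h : Module.End F V).restrict (hp0 _ h.2) v ∈ Ni := by
      intro h v hv
      rw [hNimem] at hv ⊢
      rw [LinearMap.restrict_coe_apply]
      exact hpres0 _ h.2 (i+1) _ hv
    have hp1 : ∀ z ∈ G1, ∀ v ∈ Wi, z v ∈ Wi := fun z hz => hpres1 z hz i
    have hp1' : ∀ (z : ↥G1), ∀ v : ↥Wi, v ∈ Ni →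
        (z : Module.End F V).restrict (hp1 _ z.2) v ∈ Ni := by
      intro z v hv
      rw [hNimem] at hv ⊢
      rw [LinearMap.restrict_coe_apply]
      exact hpres1 _ z.2 (i+1) _ hv
    set ΦD := qresMap Wi Ni G0 hp0 hp0' with hΦD
    set ΦS := qresMap Wi Ni G1 hp1 hp1' with hΦS
    have hDeq : ∀ h : ↥G0, ΦD h = qres Wi Ni ↑h (hp0 _ h.2) (hp0' h) := fun _ => rfl
    have hSeq : ∀ z : ↥G1, ΦS z = qres Wi Ni ↑z (hp1 _ z.2) (hp1' z) := fun _ => rfl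
    -- closure of image pair
    have hQc00 : ∀ α ∈ LinearMap.range ΦD, ∀ β ∈ LinearMap.range ΦD,
        α*β - β*α ∈ LinearMap.range ΦD := by
      rintro _ ⟨h, rfl⟩ _ ⟨k, rfl⟩
      refine ⟨⟨↑h*↑k - ↑k*↑h, c00 _ h.2 _ k.2⟩, ?_⟩
      rw [hDeq, hDeq h, hDeq k]
      rw [qres_sub Wi Ni (↑h*↑k) (↑k*↑h)
        (fun v hv => hp0 _ h.2 _ (hp0 _ k.2 v hv))
        (by intro v hv; rw [hNimem] at hv ⊢; rw [LinearMap.restrict_coe_apply];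
            exact hpres0 _ h.2 (i+1) _ (hpres0 _ k.2 (i+1) _ hv))
        (fun v hv => hp0 _ k.2 _ (hp0 _ h.2 v hv))
        (by intro v hv; rw [hNimem] at hv ⊢; rw [LinearMap.restrict_coe_apply];
            exact hpres0 _ k.2 (i+1) _ (hpres0 _ h.2 (i+1) _ hv)),
        qres_mul Wi Ni ↑h ↑k (hp0 _ h.2) (hp0' h) (hp0 _ k.2) (hp0' k),
        qres_mul Wi Ni ↑k ↑h (hp0 _ k.2) (hp0' k) (hp0 _ h.2) (hp0' h)]
    have hQc01 : ∀ α ∈ LinearMap.range ΦD, ∀ β ∈ LinearMap.range ΦS,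
        α*β - β*α ∈ LinearMap.range ΦS := by
      rintro _ ⟨h, rfl⟩ _ ⟨z, rfl⟩
      refine ⟨⟨↑h*↑z - ↑z*↑h, c01 _ h.2 _ z.2⟩, ?_⟩
      rw [hSeq, hDeq h, hSeq z]
      rw [qres_sub Wi Ni (↑h*↑z) (↑z*↑h)
        (fun v hv => hp0 _ h.2 _ (hp1 _ z.2 v hv))
        (by intro v hv; rw [hNimem] at hv ⊢; rw [LinearMap.restrict_coe_apply];
            exact hpres0 _ h.2 (i+1) _ (hpres1 _ z.2 (i+1) _ hv))
        (fun v hv => hp1 _ z.2 _ (hp0 _ h.2 v hv))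
        (by intro v hv; rw [hNimem] at hv ⊢; rw [LinearMap.restrict_coe_apply];
            exact hpres1 _ z.2 (i+1) _ (hpres0 _ h.2 (i+1) _ hv)),
        qres_mul Wi Ni ↑h ↑z (hp0 _ h.2) (hp0' h) (hp1 _ z.2) (hp1' z),
        qres_mul Wi Ni ↑z ↑h (hp1 _ z.2) (hp1' z) (hp0 _ h.2) (hp0' h)]
    have hQc11 : ∀ α ∈ LinearMap.range ΦS, ∀ β ∈ LinearMap.range ΦS,
        α*β + β*α ∈ LinearMap.range ΦD := by
      rintro _ ⟨z, rfl⟩ _ ⟨w, rfl⟩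
      refine ⟨⟨↑z*↑w + ↑w*↑z, c11 _ z.2 _ w.2⟩, ?_⟩
      rw [hDeq, hSeq z, hSeq w]
      rw [qres_add Wi Ni (↑z*↑w) (↑w*↑z)
        (fun v hv => hp1 _ z.2 _ (hp1 _ w.2 v hv))
        (by intro v hv; rw [hNimem] at hv ⊢; rw [LinearMap.restrict_coe_apply];
            exact hpres1 _ z.2 (i+1) _ (hpres1 _ w.2 (i+1) _ hv))
        (fun v hv => hp1 _ w.2 _ (hp1 _ z.2 v hv))
        (by intro v hv; rw [hNimem] at hv ⊢; rw [LinearMap.restrict_coe_apply];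
            exact hpres1 _ w.2 (i+1) _ (hpres1 _ z.2 (i+1) _ hv)),
        qres_mul Wi Ni ↑z ↑w (hp1 _ z.2) (hp1' z) (hp1 _ w.2) (hp1' w),
        qres_mul Wi Ni ↑w ↑z (hp1 _ w.2) (hp1' w) (hp1 _ z.2) (hp1' z)]
    have hQnil : ∀ α ∈ LinearMap.range ΦD, IsNilpotent α := by
      rintro _ ⟨h, rfl⟩
      obtain ⟨m, hm⟩ := hnil _ h.2
      refine ⟨m, ?_⟩
      apply LinearMap.ext; intro qv
      obtain ⟨v, rfl⟩ := Submodule.Quotient.mk_surjective _ qv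
      rw [hDeq h, qres_pow_apply]
      have h0 : (((↑h : Module.End F V).restrict (hp0 _ h.2))^m) v = 0 := by
        apply Subtype.ext
        rw [restrict_pow_coe, hm]
        simp
      rw [h0]
      simp
    -- the induced element of `c` vanishes, so the dimension drops
    have hcdrop : ∀ (hcW : ∀ v ∈ Wi, c v ∈ Wi)
        (hcW' : ∀ v : ↥Wi, v ∈ Ni → c.restrict hcW v ∈ Ni),
        qres Wi Ni c hcW hcW' = 0 := by
      intro hcW hcW'
      apply LinearMap.ext; intro qv
      obtain ⟨v, rfl⟩ := Submodule.Quotient.mk_surjective _ qv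
      rw [qres_mk, LinearMap.zero_apply]
      rw [Submodule.Quotient.mk_eq_zero]
      rw [hNimem, LinearMap.restrict_coe_apply]
      obtain ⟨u, hu⟩ := v.2
      refine ⟨u, ?_⟩
      rw [pow_succ', Module.End.mul_apply, hu]
    -- finrank bound
    have hbound : finrank F ↥(LinearMap.range ΦD) + finrank F ↥(LinearMap.range ΦS) ≤ n := by
      rcases hcmem with hcG | hcG
      · have hker : (⟨c, hcG⟩ : ↥G0) ∈ LinearMap.ker ΦD := by
          rw [LinearMap.mem_ker, hDeq]
          exact hcdrop _ _
        have hkpos : 0 < finrank F ↥(LinearMap.ker ΦD) := by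
          apply (finrank_pos_iff (R := F) (M := ↥(LinearMap.ker ΦD))).mpr
          exact ⟨⟨⟨⟨c, hcG⟩, hker⟩, 0, by
            simp only [ne_eq, Submodule.mk_eq_zero]
            exact fun hcon => hcne (by simpa using hcon)⟩⟩
        have hrr := LinearMap.finrank_range_add_finrank_ker ΦD
        have hrS := LinearMap.finrank_range_le ΦS
        omega
      · have hker : (⟨c, hcG⟩ : ↥G1) ∈ LinearMap.ker ΦS := by
          rw [LinearMap.mem_ker, hSeq]
          exact hcdrop _ _
        have hkpos : 0 < finrank F ↥(LinearMap.ker ΦS) := by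
          apply (finrank_pos_iff (R := F) (M := ↥(LinearMap.ker ΦS))).mpr
          exact ⟨⟨⟨⟨c, hcG⟩, hker⟩, 0, by
            simp only [ne_eq, Submodule.mk_eq_zero]
            exact fun hcon => hcne (by simpa using hcon)⟩⟩
        have hrr := LinearMap.finrank_range_add_finrank_ker ΦS
        have hrD := LinearMap.finrank_range_le ΦD
        omega
    haveI fdD : FiniteDimensional F ↥(LinearMap.range ΦD) :=
      Module.Finite.of_surjective ΦD.rangeRestrict ΦD.surjective_rangeRestrict
    haveI fdS : FiniteDimensional F ↥(LinearMap.range ΦS) :=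
      Module.Finite.of_surjective ΦS.rangeRestrict ΦS.surjective_rangeRestrict
    obtain ⟨N, hNpos, hN⟩ :=
      hIH (LinearMap.range ΦD) (LinearMap.range ΦS) fdD fdS hQc00 hQc01 hQc11 hQnil hbound
    refine ⟨N, hNpos, ?_⟩
    intro l hlen hmem v hv
    -- transfer the vanishing through the subquotient
    have hlift : ∀ (t : List (Module.End F V)), (∀ s ∈ t, s ∈ G0 ⊔ G1) →
        ∀ (hpr : ∀ v ∈ Wi, t.prod v ∈ Wi)
          (hpr' : ∀ v : ↥Wi, v ∈ Ni → (t.prod).restrict hpr v ∈ Ni),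
        qres Wi Ni t.prod hpr hpr' = (t.map (fun s =>
          if hs : s ∈ G0 ⊔ G1 then
            qres Wi Ni s (fun v hv => hJpres s hs i v hv)
              (fun v hv => by
                rw [hNimem] at hv ⊢
                rw [LinearMap.restrict_coe_apply]
                exact hJpres s hs (i+1) _ hv)
          else 0)).prod := by
      intro t
      induction t with
      | nil => intro _ hpr hpr'; simp [qres_one]
      | cons s t ih =>
          intro hmem hpr hpr'
          have hsJ : s ∈ G0 ⊔ G1 := hmem s (by simp)
          have htJ : ∀ r ∈ t, r ∈ G0 ⊔ G1 := fun r hr => hmem r (by simp [hr])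
          have htpr : ∀ v ∈ Wi, t.prod v ∈ Wi := fun v hv => prodpres t htJ i v hv
          have htpr' : ∀ v : ↥Wi, v ∈ Ni → (t.prod).restrict htpr v ∈ Ni := by
            intro v hv
            rw [hNimem] at hv ⊢
            rw [LinearMap.restrict_coe_apply]
            exact prodpres t htJ (i+1) _ hv
          conv_rhs => rw [List.map_cons, List.prod_cons]
          rw [qres_eq_of_eq Wi Ni (s :: t).prod (s * t.prod) List.prod_cons hpr hpr'
            (fun v hv => hJpres s hsJ i _ (htpr v hv))
            (fun v hv => by
              rw [hNimem] at hv ⊢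
              rw [LinearMap.restrict_coe_apply]
              exact hJpres s hsJ (i+1) _ (by
                have := htpr' v (by rw [hNimem]; exact hv)
                rw [hNimem, LinearMap.restrict_coe_apply] at this
                exact this))]
          rw [qres_mul Wi Ni s t.prod (fun v hv => hJpres s hsJ i v hv)
            (fun v hv => by
              rw [hNimem] at hv ⊢
              rw [LinearMap.restrict_coe_apply]
              exact hJpres s hsJ (i+1) _ hv) htpr htpr']
          rw [ih htJ htpr htpr']
          congr 1
          rw [dif_pos hsJ]
    have hmem' : ∀ α ∈ (l.map (fun s =>
        if hs : s ∈ G0 ⊔ G1 then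
          qres Wi Ni s (fun v hv => hJpres s hs i v hv)
            (fun v hv => by
              rw [hNimem] at hv ⊢
              rw [LinearMap.restrict_coe_apply]
              exact hJpres s hs (i+1) _ hv)
        else 0)), α ∈ LinearMap.range ΦD ⊔ LinearMap.range ΦS := by
      intro α hα
      rw [List.mem_map] at hα
      obtain ⟨s, hsl, rfl⟩ := hα
      have hsJ : s ∈ G0 ⊔ G1 := hmem s hsl
      rw [dif_pos hsJ]
      obtain ⟨a, ha, z, hz, rfl⟩ := Submodule.mem_sup.mp hsJ
      rw [qres_add Wi Ni a z (fun v hv => hpres0 a ha i v hv)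
        (fun v hv => by
          rw [hNimem] at hv ⊢
          rw [LinearMap.restrict_coe_apply]
          exact hpres0 a ha (i+1) _ hv)
        (fun v hv => hpres1 z hz i v hv)
        (fun v hv => by
          rw [hNimem] at hv ⊢
          rw [LinearMap.restrict_coe_apply]
          exact hpres1 z hz (i+1) _ hv)]
      exact Submodule.add_mem _
        (Submodule.mem_sup_left ⟨⟨a, ha⟩, rfl⟩)
        (Submodule.mem_sup_right ⟨⟨z, hz⟩, rfl⟩)
    have hpr : ∀ v ∈ Wi, l.prod v ∈ Wi := fun v hv => prodpres l hmem i v hv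
    have hpr' : ∀ v : ↥Wi, v ∈ Ni → (l.prod).restrict hpr v ∈ Ni := by
      intro v hv
      rw [hNimem] at hv ⊢
      rw [LinearMap.restrict_coe_apply]
      exact prodpres l hmem (i+1) _ hv
    have hzero : qres Wi Ni l.prod hpr hpr' = 0 := by
      rw [hlift l hmem hpr hpr']
      exact hN _ (by rw [List.length_map, hlen]) hmem'
    have := congrArg (fun f => f (Submodule.Quotient.mk (⟨v, hv⟩ : ↥Wi))) hzero
    simp only [qres_mk, LinearMap.zero_apply] at this
    rw [Submodule.Quotient.mk_eq_zero, hNimem, LinearMap.restrict_coe_apply] at this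
    exact this
  -- monotone version of keyLvl
  have keyLvl' : ∀ i : ℕ, ∃ N, 0 < N ∧ ∀ l : List (Module.End F V), N ≤ l.length →
      (∀ s ∈ l, s ∈ G0 ⊔ G1) → ∀ v ∈ LinearMap.range (c^i),
        l.prod v ∈ LinearMap.range (c^(i+1)) := by
    intro i
    obtain ⟨N, hNpos, hN⟩ := keyLvl i
    refine ⟨N, hNpos, ?_⟩
    intro l hlen hmem v hv
    have hsplit : l = l.take N ++ l.drop N := (List.take_append_drop N l).symm
    rw [hsplit, List.prod_append, Module.End.mul_apply]
    have h2v : (l.drop N).prod v ∈ LinearMap.range (c^i) :=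
      prodpres _ (fun s hs => hmem s (List.mem_of_mem_drop hs)) i v hv
    exact hN _ (by rw [List.length_take]; omega)
      (fun s hs => hmem s (List.mem_of_mem_take hs)) _ h2v
  -- iterate
  have main : ∀ k : ℕ, ∃ N, 0 < N ∧ ∀ l : List (Module.End F V), N ≤ l.length →
      (∀ s ∈ l, s ∈ G0 ⊔ G1) → ∀ v : V, l.prod v ∈ LinearMap.range (c^k) := by
    intro k
    induction k with
    | zero =>
        exact ⟨1, one_pos, fun l _ _ v =>
          ⟨l.prod v, by rw [pow_zero, Module.End.one_apply]⟩⟩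
    | succ k ihk =>
        obtain ⟨Nk, hNkpos, hNk⟩ := ihk
        obtain ⟨Mk, hMkpos, hMk⟩ := keyLvl' k
        refine ⟨Mk + Nk, by omega, ?_⟩
        intro l hlen hmem v
        have hsplit : l = l.take Mk ++ l.drop Mk := (List.take_append_drop Mk l).symm
        rw [hsplit, List.prod_append, Module.End.mul_apply]
        have h2v : (l.drop Mk).prod v ∈ LinearMap.range (c^k) :=
          hNk _ (by rw [List.length_drop]; omega)
            (fun s hs => hmem s (List.mem_of_mem_drop hs)) v
        exact hMk _ (by rw [List.length_take]; omega)
          (fun s hs => hmem s (List.mem_of_mem_take hs)) _ h2v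
  obtain ⟨N, hNpos, hN⟩ := main q
  refine ⟨N, hNpos, ?_⟩
  intro l hlen hmem
  apply LinearMap.ext; intro v
  have hvmem := hN l (le_of_eq hlen.symm) hmem v
  rw [hq, LinearMap.range_zero, Submodule.mem_bot] at hvmem
  simp [hvmem]

end Env

set_option maxHeartbeats 1600000 in
theorem env_aux (h2 : (2:F) ≠ 0) :
    ∀ (n : ℕ), ∀ {V : Type u} [AddCommGroup V] [Module F V]
      (G0 G1 : Submodule F (Module.End F V)),
      FiniteDimensional F G0 → FiniteDimensional F G1 →
      (∀ a ∈ G0, ∀ b ∈ G0, a*b - b*a ∈ G0) →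
      (∀ a ∈ G0, ∀ z ∈ G1, a*z - z*a ∈ G1) →
      (∀ z ∈ G1, ∀ w ∈ G1, z*w + w*z ∈ G0) →
      (∀ a ∈ G0, IsNilpotent a) →
      finrank F ↥G0 + finrank F ↥G1 ≤ n →
      ∃ N, 0 < N ∧ ∀ l : List (Module.End F V), l.length = N →
        (∀ s ∈ l, s ∈ G0 ⊔ G1) → l.prod = 0 := by
  intro n
  induction n with
  | zero =>
      intro V _ _ G0 G1 f0 f1 _ _ _ _ hmu
      refine env_bot G0 G1 ?_ ?_
      · exact (Submodule.finrank_eq_zero (R := F)).mp (by omega)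
      · exact (Submodule.finrank_eq_zero (R := F)).mp (by omega)
  | succ n IH =>
      intro V _ _ G0 G1 f0 f1 c00 c01 c11 hnil hmu
      by_cases hbot : G0 = ⊥ ∧ G1 = ⊥
      · exact env_bot G0 G1 hbot.1 hbot.2
      have hD : ∀ z ∈ G1, ∀ x ∈ G0, z*x - x*z ∈ G1 := by
        intro z hz x hx
        have h := G1.neg_mem (c01 x hx z hz); rwa [neg_sub] at h
      have hA0' : ∀ (h : ↥G0), ∀ x : ↥G0, x ∈ (⊥ : Submodule F ↥G0) →
          brk (h : Module.End F V) (fun x hx => c00 _ h.2 x hx) x ∈ (⊥ : Submodule F ↥G0) :=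
        fun h => bot_stab _
      have hB0' : ∀ (h : ↥G0), ∀ y : ↥G1, y ∈ (⊥ : Submodule F ↥G1) →
          brk (h : Module.End F V) (fun y hy => c01 _ h.2 y hy) y ∈ (⊥ : Submodule F ↥G1) :=
        fun h => bot_stab _
      have hC1' : ∀ (z : ↥G1), ∀ y : ↥G1, y ∈ (⊥ : Submodule F ↥G1) →
          abrk (z : Module.End F V) (fun y hy => c11 _ z.2 y hy) y ∈ (⊥ : Submodule F ↥G0) :=
        fun z => bot_stab _
      have hD1' : ∀ (z : ↥G1), ∀ x : ↥G0, x ∈ (⊥ : Submodule F ↥G0) →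
          brk (z : Module.End F V) (fun x hx => hD _ z.2 x hx) x ∈ (⊥ : Submodule F ↥G1) :=
        fun z => bot_stab _
      set Dmap := evenMap G0 G1 ⊥ ⊥ G0 c00 hA0' c01 hB0' with hDdef
      set Smap := oddMap G0 G1 ⊥ ⊥ G1 c11 hC1' hD hD1' with hSdef
      have hDeq : ∀ h : ↥G0, Dmap h = evenOp G0 G1 ⊥ ⊥ ↑h
          (fun x hx => c00 _ h.2 x hx) (hA0' h) (fun y hy => c01 _ h.2 y hy) (hB0' h) :=
        fun _ => rfl
      have hSeq : ∀ z : ↥G1, Smap z = oddOp G0 G1 ⊥ ⊥ ↑z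
          (fun y hy => c11 _ z.2 y hy) (hC1' z) (fun x hx => hD _ z.2 x hx) (hD1' z) :=
        fun _ => rfl
      have Dapp : ∀ (h : ↥G0) (x : ↥G0) (y : ↥G1),
          Dmap h (Submodule.Quotient.mk x, Submodule.Quotient.mk y)
            = (Submodule.Quotient.mk (brk (↑h) (fun x hx => c00 _ h.2 x hx) x),
               Submodule.Quotient.mk (brk (↑h) (fun y hy => c01 _ h.2 y hy) y)) :=
        fun h x y => evenOp_apply G0 G1 ⊥ ⊥ ↑h _ (hA0' h) _ (hB0' h) x y
      have Sapp : ∀ (z : ↥G1) (x : ↥G0) (y : ↥G1),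
          Smap z (Submodule.Quotient.mk x, Submodule.Quotient.mk y)
            = (Submodule.Quotient.mk (abrk (↑z) (fun y hy => c11 _ z.2 y hy) y),
               Submodule.Quotient.mk (brk (↑z) (fun x hx => hD _ z.2 x hx) x)) :=
        fun z x y => oddOp_apply G0 G1 ⊥ ⊥ ↑z _ (hC1' z) _ (hD1' z) x y
      have hRc00 : ∀ α ∈ LinearMap.range Dmap, ∀ β ∈ LinearMap.range Dmap,
          α*β - β*α ∈ LinearMap.range Dmap := by
        rintro _ ⟨h, rfl⟩ _ ⟨k, rfl⟩
        refine ⟨⟨↑h*↑k - ↑k*↑h, c00 _ h.2 _ k.2⟩, ?_⟩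
        exact (evenOp_comm G0 G1 ⊥ ⊥ ↑h ↑k _ (hA0' h) _ (hB0' h) _ (hA0' k) _ (hB0' k)
          _ (hA0' ⟨_, c00 _ h.2 _ k.2⟩) _ (hB0' ⟨_, c00 _ h.2 _ k.2⟩)).symm
      have hRc01 : ∀ α ∈ LinearMap.range Dmap, ∀ β ∈ LinearMap.range Smap,
          α*β - β*α ∈ LinearMap.range Smap := by
        rintro _ ⟨h, rfl⟩ _ ⟨z, rfl⟩
        refine ⟨⟨↑h*↑z - ↑z*↑h, c01 _ h.2 _ z.2⟩, ?_⟩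
        exact (evenOp_oddOp_comm G0 G1 ⊥ ⊥ ↑h ↑z _ (hA0' h) _ (hB0' h) _ (hC1' z) _ (hD1' z)
          _ (hC1' ⟨_, c01 _ h.2 _ z.2⟩) _ (hD1' ⟨_, c01 _ h.2 _ z.2⟩)).symm
      have hRc11 : ∀ α ∈ LinearMap.range Smap, ∀ β ∈ LinearMap.range Smap,
          α*β + β*α ∈ LinearMap.range Dmap := by
        rintro _ ⟨z, rfl⟩ _ ⟨w, rfl⟩
        refine ⟨⟨↑z*↑w + ↑w*↑z, c11 _ z.2 _ w.2⟩, ?_⟩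
        exact (oddOp_acomm G0 G1 ⊥ ⊥ ↑z ↑w _ (hC1' z) _ (hD1' z) _ (hC1' w) _ (hD1' w)
          _ (hA0' ⟨_, c11 _ z.2 _ w.2⟩) _ (hB0' ⟨_, c11 _ z.2 _ w.2⟩)).symm
      have hDnil : ∀ h : ↥G0, IsNilpotent (Dmap h) := by
        intro h
        obtain ⟨m, hm⟩ := isNilpotent_adEnd (F := F) (hnil _ h.2)
        refine ⟨m, ?_⟩
        apply LinearMap.ext; rintro ⟨q0, q1⟩
        obtain ⟨x, rfl⟩ := Submodule.Quotient.mk_surjective _ q0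
        obtain ⟨y, rfl⟩ := Submodule.Quotient.mk_surjective _ q1
        have hx0 : (((brk (↑h) (fun x hx => c00 _ h.2 x hx) : ↥G0 →ₗ[F] ↥G0)^m) x) = 0 := by
          apply Subtype.ext; rw [brk_pow_coe, hm]; simp
        have hy0 : (((brk (↑h) (fun y hy => c01 _ h.2 y hy) : ↥G1 →ₗ[F] ↥G1)^m) y) = 0 := by
          apply Subtype.ext; rw [brk_pow_coe, hm]; simp
        rw [hDeq h, evenOp_pow_apply, hx0, hy0]
        simp
      haveI hQnt : Nontrivial ((↥G0 ⧸ (⊥ : Submodule F ↥G0)) × (↥G1 ⧸ (⊥ : Submodule F ↥G1))) := by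
        rcases not_and_or.mp hbot with hne | hne
        · obtain ⟨x, hxG, hxne⟩ := (Submodule.ne_bot_iff G0).mp hne
          refine ⟨(Submodule.Quotient.mk ⟨x, hxG⟩, 0), 0, fun hcon => hxne ?_⟩
          have := congrArg Prod.fst hcon
          simp only [Prod.fst_zero, Submodule.Quotient.mk_eq_zero, Submodule.mem_bot] at this
          simpa using congrArg Subtype.val this
        · obtain ⟨y, hyG, hyne⟩ := (Submodule.ne_bot_iff G1).mp hne
          refine ⟨(0, Submodule.Quotient.mk ⟨y, hyG⟩), 0, fun hcon => hyne ?_⟩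
          have := congrArg Prod.snd hcon
          simp only [Prod.snd_zero, Submodule.Quotient.mk_eq_zero, Submodule.mem_bot] at this
          simpa using congrArg Subtype.val this
      haveI fdD : FiniteDimensional F ↥(LinearMap.range Dmap) :=
        Module.Finite.of_surjective Dmap.rangeRestrict Dmap.surjective_rangeRestrict
      haveI fdS : FiniteDimensional F ↥(LinearMap.range Smap) :=
        Module.Finite.of_surjective Smap.rangeRestrict Smap.surjective_rangeRestrict
      obtain ⟨⟨v0, v1⟩, hvne, hkill0, hkill1⟩ :=
        ck h2 (finrank F ↥(LinearMap.range Dmap) + finrank F ↥(LinearMap.range Smap))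
          (LinearMap.range Dmap) (LinearMap.range Smap) fdD fdS hRc00 hRc01 hRc11
          (by rintro _ ⟨h, rfl⟩; exact hDnil h) le_rfl
      obtain ⟨x0, hx0⟩ := Submodule.Quotient.mk_surjective _ v0
      obtain ⟨x1, hx1⟩ := Submodule.Quotient.mk_surjective _ v1
      have key0 : ∀ h : ↥G0,
          ((h : Module.End F V)*↑x0 - ↑x0*↑h = 0) ∧ ((h : Module.End F V)*↑x1 - ↑x1*↑h = 0) := by
        intro h
        have hk := hkill0 (Dmap h) ⟨h, rfl⟩
        rw [← hx0, ← hx1, Dapp h x0 x1] at hk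
        have h1 := congrArg Prod.fst hk
        have h2' := congrArg Prod.snd hk
        simp only [Prod.fst_zero, Prod.snd_zero, Submodule.Quotient.mk_eq_zero,
          Submodule.mem_bot] at h1 h2'
        exact ⟨by simpa using congrArg Subtype.val h1, by simpa using congrArg Subtype.val h2'⟩
      have key1 : ∀ z : ↥G1,
          ((z : Module.End F V)*↑x1 + ↑x1*↑z = 0) ∧ ((z : Module.End F V)*↑x0 - ↑x0*↑z = 0) := by
        intro z
        have hk := hkill1 (Smap z) ⟨z, rfl⟩
        rw [← hx0, ← hx1, Sapp z x0 x1] at hk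
        have h1 := congrArg Prod.fst hk
        have h2' := congrArg Prod.snd hk
        simp only [Prod.fst_zero, Prod.snd_zero, Submodule.Quotient.mk_eq_zero,
          Submodule.mem_bot] at h1 h2'
        exact ⟨by simpa using congrArg Subtype.val h1, by simpa using congrArg Subtype.val h2'⟩
      have hv01 : (x0 : Module.End F V) ≠ 0 ∨ (x1 : Module.End F V) ≠ 0 := by
        by_contra hc; push_neg at hc
        apply hvne
        have e0 : v0 = 0 := by
          rw [← hx0, Submodule.Quotient.mk_eq_zero, Submodule.mem_bot]
          exact Subtype.ext hc.1
        have e1 : v1 = 0 := by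
          rw [← hx1, Submodule.Quotient.mk_eq_zero, Submodule.mem_bot]
          exact Subtype.ext hc.2
        simp [Prod.ext_iff, e0, e1]
      rcases hv01 with hcne | hcne
      · -- even quasi-central element
        obtain ⟨q, hq⟩ := hnil _ x0.2
        refine env_step G0 G1 f0 f1 c00 c01 c11 hnil hmu (fun {W} => IH) ↑x0 q hq hcne
          (fun s hs => sub_eq_zero.mp ((key0 ⟨s, hs⟩).1))
          (fun s hs => Or.inl (sub_eq_zero.mp ((key1 ⟨s, hs⟩).2)))
          (Or.inl x0.2)
      · -- odd quasi-central element
        have hcc : (x1 : Module.End F V) * ↑x1 = 0 := by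
          have h1 := (key1 x1).1
          have h2' : (2:F) • ((x1 : Module.End F V) * ↑x1) = 0 := by
            rw [two_smul]; exact h1
          rcases smul_eq_zero.mp h2' with h | h
          · exact absurd h h2
          · exact h
        have hq : ((x1 : Module.End F V))^2 = 0 := by rw [pow_two]; exact hcc
        refine env_step G0 G1 f0 f1 c00 c01 c11 hnil hmu (fun {W} => IH) ↑x1 2 hq hcne
          (fun s hs => sub_eq_zero.mp ((key0 ⟨s, hs⟩).2))
          (fun s hs => Or.inr (eq_neg_of_add_eq_zero_left ((key1 ⟨s, hs⟩).1)))
          (Or.inr x1.2)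

theorem env {V : Type u} [AddCommGroup V] [Module F V] (h2 : (2:F) ≠ 0)
    (G0 G1 : Submodule F (Module.End F V))
    (f0 : FiniteDimensional F G0) (f1 : FiniteDimensional F G1)
    (c00 : ∀ a ∈ G0, ∀ b ∈ G0, a*b - b*a ∈ G0)
    (c01 : ∀ a ∈ G0, ∀ z ∈ G1, a*z - z*a ∈ G1)
    (c11 : ∀ z ∈ G1, ∀ w ∈ G1, z*w + w*z ∈ G0)
    (hnil : ∀ a ∈ G0, IsNilpotent a) :
    ∃ N, 0 < N ∧ ∀ l : List (Module.End F V), l.length = N →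
      (∀ s ∈ l, s ∈ G0 ⊔ G1) → l.prod = 0 :=
  env_aux h2 (finrank F ↥G0 + finrank F ↥G1) G0 G1 f0 f1 c00 c01 c11 hnil le_rfl

end SupEng



/-- A Lie superalgebra structure on an `F`-module `L`: an internal direct sum
decomposition `L = L₀ ⊕ L₁` together with a bilinear bracket satisfying the grading,
super-anticommutativity and super-Jacobi identities (the latter two stated for
homogeneous arguments and extended by bilinearity). -/
structure LieSuperStruct (F : Type*) (L : Type*) [Field F] [AddCommGroup L]
    [Module F L] where
  L0 : Submodule F L
  L1 : Submodule F L
  compl : IsCompl L0 L1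
  bracket : L →ₗ[F] L →ₗ[F] L
  grade00 : ∀ x ∈ L0, ∀ y ∈ L0, bracket x y ∈ L0
  grade01 : ∀ x ∈ L0, ∀ y ∈ L1, bracket x y ∈ L1
  grade10 : ∀ x ∈ L1, ∀ y ∈ L0, bracket x y ∈ L1
  grade11 : ∀ x ∈ L1, ∀ y ∈ L1, bracket x y ∈ L0
  anti_even : ∀ x ∈ L0, ∀ y : L, bracket x y = - bracket y x
  anti_odd : ∀ x ∈ L1, ∀ y ∈ L1, bracket x y = bracket y x
  jacobi_even : ∀ x ∈ L0, ∀ y z : L,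
    bracket x (bracket y z) = bracket (bracket x y) z + bracket y (bracket x z)
  jacobi_odd_even : ∀ x ∈ L1, ∀ y ∈ L0, ∀ z : L,
    bracket x (bracket y z) = bracket (bracket x y) z + bracket y (bracket x z)
  jacobi_odd_odd : ∀ x ∈ L1, ∀ y ∈ L1, ∀ z : L,
    bracket x (bracket y z) = bracket (bracket x y) z - bracket y (bracket x z)

namespace LieSuperStruct

variable {F L : Type*} [Field F] [AddCommGroup L] [Module F L]

/-- The span of all brackets `(x, y)` with `x ∈ M`, `y ∈ N`. -/
def bracketSpan (S : LieSuperStruct F L) (M N : Submodule F L) : Submodule F L :=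
  Submodule.span F {w | ∃ x ∈ M, ∃ y ∈ N, w = S.bracket x y}

/-- Lower central series of a subalgebra `N`: `γ₁ = N`, `γ_{n+1} = (γₙ, N)`. -/
def lcsOn (S : LieSuperStruct F L) (N : Submodule F L) : ℕ → Submodule F L
  | 0 => N
  | n + 1 => S.bracketSpan (S.lcsOn N n) N

/-- Lower central series of `L` itself. -/
def lcs (S : LieSuperStruct F L) : ℕ → Submodule F L := S.lcsOn ⊤

/-- A Lie superalgebra is nilpotent if its lower central series vanishes. -/
def IsNilpotent (S : LieSuperStruct F L) : Prop := ∃ n, S.lcs n = ⊥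

/-- `A` is an ideal of `L`. -/
def IsIdeal (S : LieSuperStruct F L) (A : Submodule F L) : Prop :=
  ∀ x ∈ A, ∀ y : L, S.bracket x y ∈ A ∧ S.bracket y x ∈ A

/-- `A` is a homogeneous (graded) submodule. -/
def IsHomogeneous (S : LieSuperStruct F L) (A : Submodule F L) : Prop :=
  A = (A ⊓ S.L0) ⊔ (A ⊓ S.L1)

/-- The adjoint map of `x`. -/
def ad (S : LieSuperStruct F L) (x : L) : Module.End F L := S.bracket x

end LieSuperStruct

/-- The left-normed `n`-fold iterated Lie commutator `[x, y, y, …, y]` in an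
associative ring. -/
def engelIter {U : Type*} [Ring U] (y : U) (n : ℕ) (x : U) : U :=
  (fun a => a * y - y * a)^[n] x

/-- An associative ring is bounded Lie Engel if it satisfies `[x, y, …, y] = 0`
(`y` repeated `n` times) identically for some `n ≥ 1`. -/
def IsBoundedLieEngel (U : Type*) [Ring U] : Prop :=
  ∃ n : ℕ, 0 < n ∧ ∀ x y : U, engelIter y n x = 0

/-- The (two-sided) ideal of an associative `F`-algebra generated by all
commutators, as an `F`-submodule. -/
def commIdeal (F U : Type*) [Field F] [Ring U] [Algebra F U] : Submodule F U :=
  Submodule.span F {w | ∃ a x y b : U, w = a * (x * y - y * x) * b}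

/-- Lower central series of the associative algebra `U` viewed as a Lie algebra
under the commutator. -/
def assocLcs (F U : Type*) [Field F] [Ring U] [Algebra F U] : ℕ → Submodule F U
  | 0 => ⊤
  | n + 1 => Submodule.span F {w | ∃ a ∈ assocLcs F U n, ∃ b : U, w = a * b - b * a}

/-- `U` is Lie nilpotent: the lower central series of `(U, [·,·])` terminates. -/
def IsLieNilpotentAlg (F U : Type*) [Field F] [Ring U] [Algebra F U] : Prop :=
  ∃ n, assocLcs F U n = ⊥

/-- `U` satisfies a (nontrivial) polynomial identity. -/
def IsPI (F U : Type*) [Field F] [Ring U] [Algebra F U] : Prop :=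
  ∃ (n : ℕ) (f : FreeAlgebra F (Fin n)), f ≠ 0 ∧
    ∀ v : Fin n → U, FreeAlgebra.lift F v f = 0

/-- `U` satisfies a non-matrix polynomial identity: a PI which fails in `M₂(F)`. -/
def IsNonMatrixPI (F U : Type*) [Field F] [Ring U] [Algebra F U] : Prop :=
  ∃ (n : ℕ) (f : FreeAlgebra F (Fin n)),
    (∀ v : Fin n → U, FreeAlgebra.lift F v f = 0) ∧
    ∃ w : Fin n → Matrix (Fin 2) (Fin 2) F, FreeAlgebra.lift F w f ≠ 0

/-- `U` together with `ι : L → U` is (a realization of) the universal enveloping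
algebra of the Lie superalgebra `L`: `ι` is an injective linear map satisfying the
super-commutation relations, its image generates `U`, and the pair has the
universal property. -/
structure IsUEA (F : Type*) {L : Type*} [Field F] [AddCommGroup L] [Module F L]
    (S : LieSuperStruct F L) (U : Type*) [Ring U] [Algebra F U]
    (ι : L →ₗ[F] U) : Prop where
  rel_even : ∀ x ∈ S.L0, ∀ y : L, ι x * ι y - ι y * ι x = ι (S.bracket x y)
  rel_odd : ∀ x ∈ S.L1, ∀ y ∈ S.L1, ι x * ι y + ι y * ι x = ι (S.bracket x y)
  inj : Function.Injective ι
  gen : Algebra.adjoin F (Set.range ι) = ⊤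
  univ : ∀ (B : Type) [Ring B] [Algebra F B] (φ : L →ₗ[F] B),
    (∀ x ∈ S.L0, ∀ y : L, φ x * φ y - φ y * φ x = φ (S.bracket x y)) →
    (∀ x ∈ S.L1, ∀ y ∈ S.L1, φ x * φ y + φ y * φ x = φ (S.bracket x y)) →
    ∃! ψ : U →ₐ[F] B, ∀ x : L, ψ (ι x) = φ x

/-- A restricted Lie superalgebra: a Lie superalgebra together with a `p`-map on
the even part satisfying `ad (x^{[p]}) = (ad x)^p` and `(c • x)^{[p]} = c^p • x^{[p]}`. -/
structure RestrictedLieSuperStruct (F : Type*) (L : Type*) [Field F]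
    [AddCommGroup L] [Module F L] (p : ℕ) extends LieSuperStruct F L where
  pmap : L → L
  pmap_mem : ∀ x ∈ L0, pmap x ∈ L0
  pmap_smul : ∀ (c : F), ∀ x ∈ L0, pmap (c • x) = c ^ p • pmap x
  pmap_ad : ∀ x ∈ L0, ∀ y : L,
    bracket (pmap x) y = ((bracket x : Module.End F L) ^ p) y

namespace RestrictedLieSuperStruct

variable {F L : Type*} [Field F] [AddCommGroup L] [Module F L] {p : ℕ}

/-- A subset of the even part is `p`-nilpotent (with bounded exponent) if some
iterate of the `p`-map kills all of its elements. -/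
def IsPNilpotentSet (S : RestrictedLieSuperStruct F L p) (T : Set L) : Prop :=
  ∃ n : ℕ, ∀ x ∈ T, S.pmap^[n] x = 0

/-- `A` is a restricted (i.e. `p`-map closed) submodule. -/
def IsRestricted (S : RestrictedLieSuperStruct F L p) (A : Submodule F L) : Prop :=
  ∀ x ∈ A, x ∈ S.L0 → S.pmap x ∈ A

end RestrictedLieSuperStruct

/-- `u` together with `ι : L → u` is (a realization of) the restricted enveloping
algebra of the restricted Lie superalgebra `L`. -/
structure IsRUEA (F : Type*) {L : Type*} [Field F] [AddCommGroup L] [Module F L]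
    {p : ℕ} (S : RestrictedLieSuperStruct F L p) (U : Type*) [Ring U]
    [Algebra F U] (ι : L →ₗ[F] U) : Prop where
  rel_even : ∀ x ∈ S.L0, ∀ y : L, ι x * ι y - ι y * ι x = ι (S.bracket x y)
  rel_odd : ∀ x ∈ S.L1, ∀ y ∈ S.L1, ι x * ι y + ι y * ι x = ι (S.bracket x y)
  rel_p : ∀ x ∈ S.L0, ι (S.pmap x) = ι x ^ p
  inj : Function.Injective ι
  gen : Algebra.adjoin F (Set.range ι) = ⊤
  univ : ∀ (B : Type) [Ring B] [Algebra F B] (φ : L →ₗ[F] B),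
    (∀ x ∈ S.L0, ∀ y : L, φ x * φ y - φ y * φ x = φ (S.bracket x y)) →
    (∀ x ∈ S.L1, ∀ y ∈ S.L1, φ x * φ y + φ y * φ x = φ (S.bracket x y)) →
    (∀ x ∈ S.L0, φ (S.pmap x) = φ x ^ p) →
    ∃! ψ : U →ₐ[F] B, ∀ x : L, ψ (ι x) = φ x


section MainHelpers
open Module

variable {F : Type*} [Field F] {L : Type*} [AddCommGroup L] [Module F L]

/-- Quotient-restricted adjoint family. -/
def adQ (b : L →ₗ[F] L →ₗ[F] L) (W : Submodule F L) (Nw : Submodule F ↥W)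
    (hW : ∀ x : L, ∀ v ∈ W, b x v ∈ W)
    (hN : ∀ (x : L), ∀ v : ↥W, v ∈ Nw → (b x).restrict (hW x) v ∈ Nw) :
    L →ₗ[F] Module.End F (↥W ⧸ Nw) where
  toFun x := SupEng.qres W Nw (b x) (hW x) (hN x)
  map_add' x y := by
    have hsum : ∀ v ∈ W, (b x + b y) v ∈ W := fun v hv => by
      rw [LinearMap.add_apply]; exact W.add_mem (hW x v hv) (hW y v hv)
    have hsum' : ∀ v : ↥W, v ∈ Nw → (b x + b y).restrict hsum v ∈ Nw := by
      intro v hv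
      have e : (b x + b y).restrict hsum v
          = (b x).restrict (hW x) v + (b y).restrict (hW y) v :=
        Subtype.ext (by simp [LinearMap.restrict_apply])
      rw [e]; exact Nw.add_mem (hN x v hv) (hN y v hv)
    show SupEng.qres W Nw (b (x+y)) (hW (x+y)) (hN (x+y))
        = SupEng.qres W Nw (b x) (hW x) (hN x) + SupEng.qres W Nw (b y) (hW y) (hN y)
    rw [SupEng.qres_eq_of_eq W Nw (b (x+y)) (b x + b y) (by rw [map_add]) _ _ hsum hsum']
    exact SupEng.qres_add W Nw (b x) (b y) (hW x) (hN x) (hW y) (hN y) hsum hsum'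
  map_smul' c x := by
    have hsm : ∀ v ∈ W, (c • b x) v ∈ W := fun v hv => by
      rw [LinearMap.smul_apply]; exact W.smul_mem c (hW x v hv)
    have hsm' : ∀ v : ↥W, v ∈ Nw → (c • b x).restrict hsm v ∈ Nw := by
      intro v hv
      have e : (c • b x).restrict hsm v = c • ((b x).restrict (hW x) v) :=
        Subtype.ext (by simp [LinearMap.restrict_apply])
      rw [e]; exact Nw.smul_mem c (hN x v hv)
    show SupEng.qres W Nw (b (c • x)) (hW (c • x)) (hN (c • x))
        = (RingHom.id F) c • SupEng.qres W Nw (b x) (hW x) (hN x)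
    rw [SupEng.qres_eq_of_eq W Nw (b (c • x)) (c • b x) (by rw [map_smul]) _ _ hsm hsm',
      RingHom.id_apply]
    exact SupEng.qres_smul W Nw c (b x) (hW x) (hN x) hsm hsm'

@[simp] lemma adQ_mk (b : L →ₗ[F] L →ₗ[F] L) (W : Submodule F L) (Nw : Submodule F ↥W)
    (hW) (hN) (x : L) (v : ↥W) :
    adQ b W Nw hW hN x (Submodule.Quotient.mk v)
      = Submodule.Quotient.mk ((b x).restrict (hW x) v) :=
  SupEng.qres_mk W Nw (b x) (hW x) (hN x) v

lemma adQ_comm (b : L →ₗ[F] L →ₗ[F] L) (W : Submodule F L) (Nw : Submodule F ↥W)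
    (hW) (hN) (x y : L)
    (hrel : (b x : Module.End F L) * (b y) - (b y) * (b x) = b (b x y)) :
    adQ b W Nw hW hN x * adQ b W Nw hW hN y - adQ b W Nw hW hN y * adQ b W Nw hW hN x
      = adQ b W Nw hW hN (b x y) := by
  apply LinearMap.ext; intro q
  obtain ⟨v, rfl⟩ := Submodule.Quotient.mk_surjective _ q
  simp only [LinearMap.sub_apply, Module.End.mul_apply, adQ_mk]
  rw [← Submodule.Quotient.mk_sub]
  refine congrArg _ (Subtype.ext ?_)
  simp only [AddSubgroupClass.coe_sub, LinearMap.restrict_coe_apply]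
  have := congrArg (fun f : Module.End F L => f ↑v) hrel
  simpa [LinearMap.sub_apply, Module.End.mul_apply] using this

lemma adQ_acomm (b : L →ₗ[F] L →ₗ[F] L) (W : Submodule F L) (Nw : Submodule F ↥W)
    (hW) (hN) (x y : L)
    (hrel : (b x : Module.End F L) * (b y) + (b y) * (b x) = b (b x y)) :
    adQ b W Nw hW hN x * adQ b W Nw hW hN y + adQ b W Nw hW hN y * adQ b W Nw hW hN x
      = adQ b W Nw hW hN (b x y) := by
  apply LinearMap.ext; intro q
  obtain ⟨v, rfl⟩ := Submodule.Quotient.mk_surjective _ q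
  simp only [LinearMap.add_apply, Module.End.mul_apply, adQ_mk]
  rw [← Submodule.Quotient.mk_add]
  refine congrArg _ (Subtype.ext ?_)
  simp only [Submodule.coe_add, LinearMap.restrict_coe_apply]
  have := congrArg (fun f : Module.End F L => f ↑v) hrel
  simpa [LinearMap.add_apply, Module.End.mul_apply] using this

lemma adQ_pow_zero (b : L →ₗ[F] L →ₗ[F] L) (W : Submodule F L) (Nw : Submodule F ↥W)
    (hW) (hN) (x : L) (m : ℕ) (hx : (b x : Module.End F L)^m = 0) :
    (adQ b W Nw hW hN x)^m = 0 := by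
  apply LinearMap.ext; intro q
  obtain ⟨v, rfl⟩ := Submodule.Quotient.mk_surjective _ q
  show ((SupEng.qres W Nw (b x) (hW x) (hN x))^m) (Submodule.Quotient.mk v) = _
  rw [SupEng.qres_pow_apply]
  have h0 : (((b x).restrict (hW x) : ↥W →ₗ[F] ↥W)^m) v = 0 := by
    apply Subtype.ext
    rw [SupEng.restrict_pow_coe, hx]
    simp
  rw [h0]
  simp

lemma adQ_prod_mk (b : L →ₗ[F] L →ₗ[F] L) (W : Submodule F L) (Nw : Submodule F ↥W)
    (hW) (hN) (xs : List L) (v : ↥W) :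
    (xs.map (adQ b W Nw hW hN)).prod (Submodule.Quotient.mk v)
      = Submodule.Quotient.mk (xs.foldr (fun x u => (b x).restrict (hW x) u) v) := by
  induction xs with
  | nil => simp
  | cons x t ih =>
      rw [List.map_cons, List.prod_cons, Module.End.mul_apply, ih, List.foldr_cons]
      exact adQ_mk b W Nw hW hN x _

lemma foldr_restrict_coe (b : L →ₗ[F] L →ₗ[F] L) (W : Submodule F L)
    (hW : ∀ x : L, ∀ v ∈ W, b x v ∈ W) (xs : List L) (v : ↥W) :
    ((xs.foldr (fun x u => (b x).restrict (hW x) u) v : ↥W) : L)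
      = xs.foldr (fun x u => b x u) (v : L) := by
  induction xs with
  | nil => rfl
  | cons x t ih => rw [List.foldr_cons, List.foldr_cons, LinearMap.restrict_coe_apply, ih]

/-- The key per-level vanishing coming from the nilpotency of the image
of the adjoint representation on a subquotient. -/
lemma app_key {F L : Type*} [Field F] [AddCommGroup L] [Module F L]
    (S : LieSuperStruct F L) (h2 : (2:F) ≠ 0)
    (W : Submodule F L) (Nw : Submodule F ↥W)
    (hW : ∀ x : L, ∀ v ∈ W, S.bracket x v ∈ W)
    (hN : ∀ (x : L), ∀ v : ↥W, v ∈ Nw → (S.bracket x).restrict (hW x) v ∈ Nw)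
    (hFD0 : FiniteDimensional F ↥(Submodule.map (adQ S.bracket W Nw hW hN) S.L0))
    (hFD1 : FiniteDimensional F ↥(Submodule.map (adQ S.bracket W Nw hW hN) S.L1))
    (hnil : ∀ x ∈ S.L0, IsNilpotent (S.bracket x : Module.End F L)) :
    ∃ N, 0 < N ∧ ∀ xs : List L, xs.length = N → ∀ v : ↥W,
      xs.foldr (fun x u => (S.bracket x).restrict (hW x) u) v ∈ Nw := by
  have hdec : ∀ x : L, ∃ y ∈ S.L0, ∃ z ∈ S.L1, y + z = x := by
    intro x
    have htop : S.L0 ⊔ S.L1 = ⊤ := S.compl.codisjoint.eq_top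
    exact Submodule.mem_sup.mp (by rw [htop]; trivial)
  have R1 : ∀ x ∈ S.L0, ∀ y : L,
      (S.bracket x : Module.End F L) * (S.bracket y) - (S.bracket y) * (S.bracket x)
        = S.bracket (S.bracket x y) := by
    intro x hx y
    apply LinearMap.ext; intro z
    simp only [LinearMap.sub_apply, Module.End.mul_apply]
    rw [S.jacobi_even x hx y z]
    abel
  have R2 : ∀ x ∈ S.L1, ∀ y ∈ S.L1,
      (S.bracket x : Module.End F L) * (S.bracket y) + (S.bracket y) * (S.bracket x)
        = S.bracket (S.bracket x y) := by
    intro x hx y hy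
    apply LinearMap.ext; intro z
    simp only [LinearMap.add_apply, Module.End.mul_apply]
    rw [S.jacobi_odd_odd x hx y hy z]
    abel
  set ρ := adQ S.bracket W Nw hW hN with hρ
  have c00 : ∀ α ∈ Submodule.map ρ S.L0, ∀ β ∈ Submodule.map ρ S.L0,
      α*β - β*α ∈ Submodule.map ρ S.L0 := by
    rintro _ ⟨x, hx, rfl⟩ _ ⟨y, hy, rfl⟩
    exact ⟨S.bracket x y, S.grade00 x hx y hy,
      (adQ_comm S.bracket W Nw hW hN x y (R1 x hx y)).symm⟩
  have c01 : ∀ α ∈ Submodule.map ρ S.L0, ∀ β ∈ Submodule.map ρ S.L1,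
      α*β - β*α ∈ Submodule.map ρ S.L1 := by
    rintro _ ⟨x, hx, rfl⟩ _ ⟨z, hz, rfl⟩
    exact ⟨S.bracket x z, S.grade01 x hx z hz,
      (adQ_comm S.bracket W Nw hW hN x z (R1 x hx z)).symm⟩
  have c11 : ∀ α ∈ Submodule.map ρ S.L1, ∀ β ∈ Submodule.map ρ S.L1,
      α*β + β*α ∈ Submodule.map ρ S.L0 := by
    rintro _ ⟨z, hz, rfl⟩ _ ⟨w, hw, rfl⟩
    exact ⟨S.bracket z w, S.grade11 z hz w hw,
      (adQ_acomm S.bracket W Nw hW hN z w (R2 z hz w hw)).symm⟩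
  have hnilQ : ∀ α ∈ Submodule.map ρ S.L0, IsNilpotent α := by
    rintro _ ⟨x, hx, rfl⟩
    obtain ⟨m, hm⟩ := hnil x hx
    exact ⟨m, adQ_pow_zero S.bracket W Nw hW hN x m hm⟩
  obtain ⟨N, hNpos, hvan⟩ := SupEng.env h2 (Submodule.map ρ S.L0) (Submodule.map ρ S.L1)
    hFD0 hFD1 c00 c01 c11 hnilQ
  refine ⟨N, hNpos, ?_⟩
  intro xs hlen v
  have hlet : ∀ s ∈ xs.map ρ, s ∈ Submodule.map ρ S.L0 ⊔ Submodule.map ρ S.L1 := by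
    intro s hs
    rw [List.mem_map] at hs
    obtain ⟨x, _, rfl⟩ := hs
    obtain ⟨y, hy, z, hz, rfl⟩ := hdec x
    rw [map_add]
    exact Submodule.add_mem _ (Submodule.mem_sup_left ⟨y, hy, rfl⟩)
      (Submodule.mem_sup_right ⟨z, hz, rfl⟩)
  have h0 : (xs.map ρ).prod = 0 := hvan _ (by rw [List.length_map, hlen]) hlet
  have := congrArg (fun f : Module.End F (↥W ⧸ Nw) => f (Submodule.Quotient.mk v)) h0
  simp only [LinearMap.zero_apply] at this
  rw [adQ_prod_mk] at this
  rwa [Submodule.Quotient.mk_eq_zero] at this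

lemma fd_quot_top {F L : Type*} [Field F] [AddCommGroup L] [Module F L] (A : Submodule F L)
    [FiniteDimensional F (L ⧸ A)] :
    FiniteDimensional F ((↥(⊤ : Submodule F L)) ⧸ (A.comap (⊤ : Submodule F L).subtype)) := by
  set g : L →ₗ[F] ((↥(⊤ : Submodule F L)) ⧸ (A.comap (⊤ : Submodule F L).subtype)) :=
    (A.comap (⊤ : Submodule F L).subtype).mkQ ∘ₗ
      (Submodule.topEquiv (R := F) (M := L)).symm.toLinearMap with hg
  have hker : A ≤ LinearMap.ker g := by
    intro a ha
    rw [LinearMap.mem_ker, hg, LinearMap.comp_apply]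
    rw [Submodule.mkQ_apply, Submodule.Quotient.mk_eq_zero]
    show ((Submodule.topEquiv.symm a : ↥(⊤ : Submodule F L)) : L) ∈ A
    simpa using ha
  have hsurj : Function.Surjective g := by
    intro q
    obtain ⟨v, rfl⟩ := Submodule.Quotient.mk_surjective _ q
    refine ⟨↑v, ?_⟩
    rw [hg, LinearMap.comp_apply, Submodule.mkQ_apply]
    exact congrArg _ (Subtype.ext (by simp))
  have hcomp : Function.Surjective ⇑((A.liftQ g hker).comp A.mkQ) := by
    rw [Submodule.liftQ_mkQ]; exact hsurj
  rw [LinearMap.coe_comp] at hcomp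
  exact Module.Finite.of_surjective (A.liftQ g hker) (Function.Surjective.of_comp hcomp)

lemma fd_map {F M N : Type*} [Field F] [AddCommGroup M] [Module F M] [AddCommGroup N]
    [Module F N] (p : Submodule F M) [FiniteDimensional F p] (f : M →ₗ[F] N) :
    FiniteDimensional F ↥(p.map f) := by
  have h : p.map f = LinearMap.range (f ∘ₗ p.subtype) := by
    rw [LinearMap.range_comp, Submodule.range_subtype]
  rw [h]
  exact Module.Finite.of_surjective (f ∘ₗ p.subtype).rangeRestrict
    (LinearMap.surjective_rangeRestrict _)

end MainHelpers

section ChainHelpers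
open Module
variable {F L : Type*} [Field F] [AddCommGroup L] [Module F L]

lemma chain_le (S : LieSuperStruct F L) :
    ∀ (m : ℕ) (Q P : Submodule F L),
      (∀ xs : List L, xs.length = m → ∀ a ∈ Q,
        xs.foldr (fun x v => S.bracket x v) a ∈ P) →
      (fun R => S.bracketSpan ⊤ R)^[m] Q ≤ P := by
  intro m
  induction m with
  | zero =>
      intro Q P h
      rw [Function.iterate_zero_apply]
      intro a ha
      exact h [] rfl a ha
  | succ m ih =>
      intro Q P h
      rw [Function.iterate_succ_apply]
      apply ih
      intro xs hxs a ha
      -- chain as a linear map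
      have hcM : ∀ (ys : List L) (u : L),
          ((ys.map (fun x => (S.bracket x : Module.End F L))).prod) u
            = ys.foldr (fun x v => S.bracket x v) u := by
        intro ys
        induction ys with
        | nil => intro u; simp
        | cons x t iht =>
            intro u
            rw [List.map_cons, List.prod_cons, Module.End.mul_apply, iht, List.foldr_cons]
      have hle : S.bracketSpan ⊤ Q ≤
          Submodule.comap ((xs.map (fun x => (S.bracket x : Module.End F L))).prod) P := by
        rw [LieSuperStruct.bracketSpan, Submodule.span_le]
        rintro w ⟨x, -, y, hy, rfl⟩
        show ((xs.map (fun x => (S.bracket x : Module.End F L))).prod) (S.bracket x y) ∈ P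
        rw [hcM]
        have : xs.foldr (fun x v => S.bracket x v) (S.bracket x y)
            = (xs ++ [x]).foldr (fun x v => S.bracket x v) y := by
          rw [List.foldr_append, List.foldr_cons, List.foldr_nil]
        rw [this]
        exact h (xs ++ [x]) (by simp [hxs]) y hy
      have := hle ha
      rw [Submodule.mem_comap, hcM] at this
      exact this

lemma iter_mono (S : LieSuperStruct F L) (m : ℕ) {P P' : Submodule F L} (h : P ≤ P') :
    (fun R => S.bracketSpan ⊤ R)^[m] P ≤ (fun R => S.bracketSpan ⊤ R)^[m] P' := by
  induction m generalizing P P' with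
  | zero => simpa using h
  | succ m ih =>
      rw [Function.iterate_succ_apply, Function.iterate_succ_apply]
      refine ih ?_
      rw [LieSuperStruct.bracketSpan]
      apply Submodule.span_le.mpr
      rintro w ⟨x, hx, y, hy, rfl⟩
      exact Submodule.subset_span ⟨x, hx, y, h hy, rfl⟩

lemma iter_graded (S : LieSuperStruct F L) :
    ∀ n : ℕ, (fun R => S.bracketSpan ⊤ R)^[n] ⊤ ≤
      (((fun R => S.bracketSpan ⊤ R)^[n] ⊤) ⊓ S.L0)
        ⊔ (((fun R => S.bracketSpan ⊤ R)^[n] ⊤) ⊓ S.L1) := by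
  have hdec : ∀ x : L, ∃ y ∈ S.L0, ∃ z ∈ S.L1, y + z = x := by
    intro x
    have htop : S.L0 ⊔ S.L1 = ⊤ := S.compl.codisjoint.eq_top
    exact Submodule.mem_sup.mp (by rw [htop]; trivial)
  intro n
  induction n with
  | zero =>
      rw [Function.iterate_zero_apply]
      intro x _
      obtain ⟨y, hy, z, hz, rfl⟩ := hdec x
      exact Submodule.add_mem _
        (Submodule.mem_sup_left (Submodule.mem_inf.mpr ⟨trivial, hy⟩))
        (Submodule.mem_sup_right (Submodule.mem_inf.mpr ⟨trivial, hz⟩))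
  | succ n ih =>
      rw [Function.iterate_succ_apply']
      conv_lhs => rw [LieSuperStruct.bracketSpan]
      apply Submodule.span_le.mpr
      rintro w ⟨x, -, m, hm, rfl⟩
      obtain ⟨x0, hx0, x1, hx1, rfl⟩ := hdec x
      obtain ⟨m0, hm0, m1, hm1, rfl⟩ := Submodule.mem_sup.mp (ih hm)
      have hgen : ∀ u mm, mm ∈ (fun R => S.bracketSpan ⊤ R)^[n] ⊤ →
          S.bracket u mm ∈ S.bracketSpan ⊤ ((fun R => S.bracketSpan ⊤ R)^[n] ⊤) :=
        fun u mm hmm => Submodule.subset_span ⟨u, trivial, mm, hmm, rfl⟩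
      have e : S.bracket (x0 + x1) (m0 + m1)
          = ((S.bracket x0 m0 + S.bracket x0 m1) + S.bracket x1 m0) + S.bracket x1 m1 := by
        simp only [map_add, LinearMap.add_apply]
        abel
      rw [e]
      obtain ⟨hm0C, hm0L⟩ := Submodule.mem_inf.mp hm0
      obtain ⟨hm1C, hm1L⟩ := Submodule.mem_inf.mp hm1
      refine Submodule.add_mem _ (Submodule.add_mem _ (Submodule.add_mem _ ?_ ?_) ?_) ?_
      · exact Submodule.mem_sup_left (Submodule.mem_inf.mpr
          ⟨hgen x0 m0 hm0C, S.grade00 x0 hx0 m0 hm0L⟩)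
      · exact Submodule.mem_sup_right (Submodule.mem_inf.mpr
          ⟨hgen x0 m1 hm1C, S.grade01 x0 hx0 m1 hm1L⟩)
      · exact Submodule.mem_sup_right (Submodule.mem_inf.mpr
          ⟨hgen x1 m0 hm0C, S.grade10 x1 hx1 m0 hm0L⟩)
      · exact Submodule.mem_sup_left (Submodule.mem_inf.mpr
          ⟨hgen x1 m1 hm1C, S.grade11 x1 hx1 m1 hm1L⟩)

lemma lcs_le_iter (S : LieSuperStruct F L) :
    ∀ n : ℕ, S.lcs n ≤ (fun R => S.bracketSpan ⊤ R)^[n] ⊤ := by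
  have hdec : ∀ x : L, ∃ y ∈ S.L0, ∃ z ∈ S.L1, y + z = x := by
    intro x
    have htop : S.L0 ⊔ S.L1 = ⊤ := S.compl.codisjoint.eq_top
    exact Submodule.mem_sup.mp (by rw [htop]; trivial)
  intro n
  induction n with
  | zero => simp [LieSuperStruct.lcs, LieSuperStruct.lcsOn]
  | succ n ih =>
      have hgen : ∀ u mm, mm ∈ (fun R => S.bracketSpan ⊤ R)^[n] ⊤ →
          S.bracket u mm ∈ (fun R => S.bracketSpan ⊤ R)^[n+1] ⊤ := by
        intro u mm hmm
        rw [Function.iterate_succ_apply']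
        exact Submodule.subset_span ⟨u, trivial, mm, hmm, rfl⟩
      show S.bracketSpan (S.lcs n) ⊤ ≤ _
      rw [LieSuperStruct.bracketSpan]
      apply Submodule.span_le.mpr
      rintro w ⟨g, hg, y, -, rfl⟩
      have hgC := ih hg
      obtain ⟨g0, hg0, g1, hg1, rfl⟩ := Submodule.mem_sup.mp (iter_graded S n hgC)
      obtain ⟨y0, hy0, y1, hy1, rfl⟩ := hdec y
      have e : S.bracket (g0 + g1) (y0 + y1)
          = (S.bracket g0 (y0 + y1) + S.bracket g1 y0) + S.bracket g1 y1 := by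
        simp only [map_add, LinearMap.add_apply]
        abel
      rw [e]
      obtain ⟨hg0C, hg0L⟩ := Submodule.mem_inf.mp hg0
      obtain ⟨hg1C, hg1L⟩ := Submodule.mem_inf.mp hg1
      refine Submodule.add_mem _ (Submodule.add_mem _ ?_ ?_) ?_
      · have ha := S.anti_even g0 hg0L (y0 + y1)
        rw [ha]
        exact Submodule.neg_mem _ (hgen (y0+y1) g0 hg0C)
      · have ha := S.anti_even y0 hy0 g1
        have hb : S.bracket g1 y0 = - S.bracket y0 g1 := by rw [ha, neg_neg]
        rw [hb]
        exact Submodule.neg_mem _ (hgen y0 g1 hg1C)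
      · have ha := S.anti_odd g1 hg1L y1 hy1
        rw [ha]
        exact hgen y1 g1 hg1C

end ChainHelpers

set_option maxHeartbeats 1600000

/-- a restricted Lie superalgebra with ad-nilpotent even part, a
homogeneous restricted ideal `A` of finite codimension with `A'` finite-dimensional
and `(A',A') = 0`, and `(L₁,L₁)` `p`-nilpotent or `(L₀,L₁) = 0`, is nilpotent. -/
theorem restricted_nilpotent_of_ideal {F L : Type*} [Field F] [AddCommGroup L]
    [Module F L] (p : ℕ) [CharP F p] (hp : 2 < p)
    (S : RestrictedLieSuperStruct F L p)
    (had : ∀ x ∈ S.L0, IsNilpotent (S.toLieSuperStruct.ad x))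
    (A : Submodule F L)
    (hAideal : S.toLieSuperStruct.IsIdeal A)
    (hAhom : S.toLieSuperStruct.IsHomogeneous A)
    (hAres : S.IsRestricted A)
    (hcodim : FiniteDimensional F (L ⧸ A))
    (hder : FiniteDimensional F (S.toLieSuperStruct.bracketSpan A A))
    (hderab : S.toLieSuperStruct.bracketSpan
        (S.toLieSuperStruct.bracketSpan A A) (S.toLieSuperStruct.bracketSpan A A) = ⊥)
    (halt : S.IsPNilpotentSet (S.toLieSuperStruct.bracketSpan S.L1 S.L1 : Set L) ∨
      S.toLieSuperStruct.bracketSpan S.L0 S.L1 = ⊥) :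
    S.toLieSuperStruct.IsNilpotent := by
  classical
  set T := S.toLieSuperStruct with hT
  -- characteristic facts
  have hp2 : (2:F) ≠ 0 := by
    intro h20
    have h2n : ((2:ℕ):F) = 0 := by exact_mod_cast h20
    rw [CharP.cast_eq_zero_iff F p 2] at h2n
    have := Nat.le_of_dvd (by norm_num) h2n
    omega
  -- A is invariant under all adjoints
  have hWA : ∀ x : L, ∀ v ∈ A, T.bracket x v ∈ A := fun x v hv => (hAideal v hv x).2
  set A' := T.bracketSpan A A with hA'
  have hgenA' : ∀ x ∈ A, ∀ y ∈ A, T.bracket x y ∈ A' :=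
    fun x hx y hy => Submodule.subset_span ⟨x, hx, y, hy, rfl⟩
  have hAdec : ∀ a ∈ A, ∃ a0, (a0 ∈ A ∧ a0 ∈ T.L0) ∧ ∃ a1, (a1 ∈ A ∧ a1 ∈ T.L1) ∧ a0 + a1 = a := by
    intro a ha
    rw [hAhom] at ha
    obtain ⟨a0, ha0, a1, ha1, hsum⟩ := Submodule.mem_sup.mp ha
    exact ⟨a0, ha0, a1, ha1, hsum⟩
  have hdec : ∀ x : L, ∃ y ∈ T.L0, ∃ z ∈ T.L1, y + z = x := by
    intro x
    have htop : T.L0 ⊔ T.L1 = ⊤ := T.compl.codisjoint.eq_top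
    exact Submodule.mem_sup.mp (by rw [htop]; trivial)
  -- A' is invariant under all adjoints
  have hyA'h : ∀ x, (x ∈ T.L0 ∨ x ∈ T.L1) → ∀ u ∈ A', T.bracket x u ∈ A' := by
    intro x hx u hu
    induction hu using Submodule.span_induction with
    | mem w hw =>
        obtain ⟨a, ha, a', ha', rfl⟩ := hw
        rcases hx with hx | hx
        · rw [T.jacobi_even x hx a a']
          exact A'.add_mem (hgenA' _ (hWA x a ha) _ ha') (hgenA' _ ha _ (hWA x a' ha'))
        · obtain ⟨a0, ha0, a1, ha1, rfl⟩ := hAdec a ha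
          have e : T.bracket (a0 + a1) a' = T.bracket a0 a' + T.bracket a1 a' := by
            rw [map_add, LinearMap.add_apply]
          rw [e, map_add]
          refine A'.add_mem ?_ ?_
          · rw [T.jacobi_odd_even x hx a0 ha0.2 a']
            exact A'.add_mem (hgenA' _ (hWA x a0 ha0.1) _ ha')
              (hgenA' _ ha0.1 _ (hWA x a' ha'))
          · rw [T.jacobi_odd_odd x hx a1 ha1.2 a']
            exact A'.sub_mem (hgenA' _ (hWA x a1 ha1.1) _ ha')
              (hgenA' _ ha1.1 _ (hWA x a' ha'))
    | zero => rw [map_zero]; exact A'.zero_mem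
    | add u v hu hv ihu ihv => rw [map_add]; exact A'.add_mem ihu ihv
    | smul c u hu ihu => rw [map_smul]; exact A'.smul_mem c ihu
  have hyA' : ∀ x : L, ∀ u ∈ A', T.bracket x u ∈ A' := by
    intro x u hu
    obtain ⟨x0, hx0, x1, hx1, rfl⟩ := hdec x
    have e : T.bracket (x0 + x1) u = T.bracket x0 u + T.bracket x1 u := by
      rw [map_add, LinearMap.add_apply]
    rw [e]
    exact A'.add_mem (hyA'h x0 (Or.inl hx0) u hu) (hyA'h x1 (Or.inr hx1) u hu)
  have hadnil : ∀ x ∈ T.L0, IsNilpotent (T.bracket x : Module.End F L) :=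
    fun x hx => had x hx
  -- ======== Application 1 : action on L / A ========
  have hW1 : ∀ x : L, ∀ v ∈ (⊤ : Submodule F L), T.bracket x v ∈ (⊤ : Submodule F L) :=
    fun x v _ => trivial
  have hN1 : ∀ x : L, ∀ v : ↥(⊤ : Submodule F L),
      v ∈ A.comap (⊤ : Submodule F L).subtype →
      (T.bracket x).restrict (hW1 x) v ∈ A.comap (⊤ : Submodule F L).subtype := by
    intro x v hv
    have hvA : (v : L) ∈ A := hv
    show ((T.bracket x).restrict (hW1 x) v : L) ∈ A
    rw [LinearMap.restrict_coe_apply]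
    exact hWA x _ hvA
  haveI hfdq1 : FiniteDimensional F
      ((↥(⊤ : Submodule F L)) ⧸ (A.comap (⊤ : Submodule F L).subtype)) := fd_quot_top A
  haveI : FiniteDimensional F
      (Module.End F ((↥(⊤ : Submodule F L)) ⧸ (A.comap (⊤ : Submodule F L).subtype))) :=
    Module.Finite.linearMap F F _ _
  obtain ⟨N1, hN1p, K1⟩ := app_key T hp2 ⊤ (A.comap (⊤ : Submodule F L).subtype) hW1 hN1
    inferInstance inferInstance hadnil
  have hCh1 : ∀ xs : List L, xs.length = N1 → ∀ a ∈ (⊤ : Submodule F L),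
      xs.foldr (fun x v => T.bracket x v) a ∈ A := by
    intro xs hxs a _
    have hm := K1 xs hxs ⟨a, trivial⟩
    have hc : ((xs.foldr (fun x u => (T.bracket x).restrict (hW1 x) u) ⟨a, trivial⟩ :
        ↥(⊤ : Submodule F L)) : L) ∈ A := hm
    rwa [foldr_restrict_coe] at hc
  -- ======== Application 2 : action on A / A' ========
  have hW2 : ∀ x : L, ∀ v ∈ A, T.bracket x v ∈ A := hWA
  have hN2 : ∀ x : L, ∀ v : ↥A, v ∈ A'.comap A.subtype →
      (T.bracket x).restrict (hW2 x) v ∈ A'.comap A.subtype := by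
    intro x v hv
    have hvA : (v : L) ∈ A' := hv
    show ((T.bracket x).restrict (hW2 x) v : L) ∈ A'
    rw [LinearMap.restrict_coe_apply]
    exact hyA' x _ hvA
  have hker2 : A ≤ LinearMap.ker (adQ T.bracket A (A'.comap A.subtype) hW2 hN2) := by
    intro a ha
    rw [LinearMap.mem_ker]
    apply LinearMap.ext; intro q
    obtain ⟨v, rfl⟩ := Submodule.Quotient.mk_surjective _ q
    rw [adQ_mk, LinearMap.zero_apply, Submodule.Quotient.mk_eq_zero]
    show ((T.bracket a).restrict (hW2 a) v : L) ∈ A'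
    rw [LinearMap.restrict_coe_apply]
    exact hgenA' a ha _ v.2
  haveI hfdA : FiniteDimensional F ↥(Submodule.map A.mkQ T.L0) := inferInstance
  haveI hfdA1 : FiniteDimensional F ↥(Submodule.map A.mkQ T.L1) := inferInstance
  have hfd20 : FiniteDimensional F
      ↥(Submodule.map (adQ T.bracket A (A'.comap A.subtype) hW2 hN2) T.L0) := by
    have heq : Submodule.map (adQ T.bracket A (A'.comap A.subtype) hW2 hN2) T.L0
        = Submodule.map (A.liftQ _ hker2) (Submodule.map A.mkQ T.L0) := by
      rw [← Submodule.map_comp, Submodule.liftQ_mkQ]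
    rw [heq]
    exact fd_map _ _
  have hfd21 : FiniteDimensional F
      ↥(Submodule.map (adQ T.bracket A (A'.comap A.subtype) hW2 hN2) T.L1) := by
    have heq : Submodule.map (adQ T.bracket A (A'.comap A.subtype) hW2 hN2) T.L1
        = Submodule.map (A.liftQ _ hker2) (Submodule.map A.mkQ T.L1) := by
      rw [← Submodule.map_comp, Submodule.liftQ_mkQ]
    rw [heq]
    exact fd_map _ _
  obtain ⟨N2, hN2p, K2⟩ := app_key T hp2 A (A'.comap A.subtype) hW2 hN2 hfd20 hfd21 hadnil
  have hCh2 : ∀ xs : List L, xs.length = N2 → ∀ a ∈ A,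
      xs.foldr (fun x v => T.bracket x v) a ∈ A' := by
    intro xs hxs a ha
    have hm := K2 xs hxs ⟨a, ha⟩
    have hc : ((xs.foldr (fun x u => (T.bracket x).restrict (hW2 x) u) ⟨a, ha⟩ : ↥A) : L)
        ∈ A' := hm
    rwa [foldr_restrict_coe] at hc
  -- ======== Application 3 : action on A' ========
  have hW3 : ∀ x : L, ∀ v ∈ A', T.bracket x v ∈ A' := hyA'
  have hN3 : ∀ x : L, ∀ v : ↥A', v ∈ (⊥ : Submodule F ↥A') →
      (T.bracket x).restrict (hW3 x) v ∈ (⊥ : Submodule F ↥A') := by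
    intro x v hv
    rw [Submodule.mem_bot] at hv ⊢
    rw [hv, map_zero]
  haveI hfdA' : FiniteDimensional F ↥A' := hder
  haveI : FiniteDimensional F (↥A' ⧸ (⊥ : Submodule F ↥A')) :=
    Module.Finite.of_surjective (⊥ : Submodule F ↥A').mkQ (Submodule.Quotient.mk_surjective _)
  haveI : FiniteDimensional F (Module.End F (↥A' ⧸ (⊥ : Submodule F ↥A'))) :=
    Module.Finite.linearMap F F _ _
  obtain ⟨N3, hN3p, K3⟩ := app_key T hp2 A' ⊥ hW3 hN3 inferInstance inferInstance hadnil
  have hCh3 : ∀ xs : List L, xs.length = N3 → ∀ a ∈ A',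
      xs.foldr (fun x v => T.bracket x v) a ∈ (⊥ : Submodule F L) := by
    intro xs hxs a ha
    have hm := K3 xs hxs ⟨a, ha⟩
    rw [Submodule.mem_bot] at hm
    have hc : ((xs.foldr (fun x u => (T.bracket x).restrict (hW3 x) u) ⟨a, ha⟩ : ↥A') : L)
        = 0 := by rw [hm]; rfl
    rw [foldr_restrict_coe] at hc
    rw [Submodule.mem_bot]
    exact hc
  -- ======== assemble ========
  have h1 : (fun R => T.bracketSpan ⊤ R)^[N1] ⊤ ≤ A := chain_le T N1 ⊤ A hCh1
  have h2' : (fun R => T.bracketSpan ⊤ R)^[N2] A ≤ A' := chain_le T N2 A A' hCh2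
  have h3' : (fun R => T.bracketSpan ⊤ R)^[N3] A' ≤ ⊥ := chain_le T N3 A' ⊥ hCh3
  have hiter : (fun R => T.bracketSpan ⊤ R)^[N3 + (N2 + N1)] ⊤ ≤ ⊥ := by
    rw [Function.iterate_add_apply, Function.iterate_add_apply]
    exact le_trans (iter_mono T N3 (le_trans (iter_mono T N2 h1) h2')) h3'
  exact ⟨N3 + (N2 + N1), le_bot_iff.mp (le_trans (lcs_le_iter T _) hiter)⟩
end

section
/- Let L = L₀ ⊕ L₁ be a restricted Lie superalgebra over a field of characteristic p > 2 such that L is nilpotent, (L₀,L₀) is p-nilpotent, dim L₁ = 1 with (L₁,L₀) = 0, and the ideal [u(L),u(L)]u(L) of the restricted enveloping algebra u(L) is nil of bounded index p^m. Then u(L) is bounded Lie Engel. -/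
section AuxCommIdeal

variable {F U : Type*} [Field F] [Ring U] [Algebra F U]

lemma commIdeal_mul_left (u : U) {w : U} (hw : w ∈ commIdeal F U) :
    u * w ∈ commIdeal F U := by
  induction hw using Submodule.span_induction with
  | mem x hx =>
    obtain ⟨a, x', y', b, rfl⟩ := hx
    exact Submodule.subset_span ⟨u * a, x', y', b, by rw [mul_assoc, mul_assoc, mul_assoc]⟩
  | zero => simpa using (commIdeal F U).zero_mem
  | add a b _ _ ha hb => simpa [mul_add] using Submodule.add_mem _ ha hb
  | smul c a _ ha => simpa [mul_smul_comm] using Submodule.smul_mem _ c ha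

lemma commIdeal_mul_right {w : U} (hw : w ∈ commIdeal F U) (u : U) :
    w * u ∈ commIdeal F U := by
  induction hw using Submodule.span_induction with
  | mem x hx =>
    obtain ⟨a, x', y', b, rfl⟩ := hx
    exact Submodule.subset_span ⟨a, x', y', b * u, by simp [mul_assoc]⟩
  | zero => simpa using (commIdeal F U).zero_mem
  | add a b _ _ ha hb => simpa [add_mul] using Submodule.add_mem _ ha hb
  | smul c a _ ha => simpa [smul_mul_assoc] using Submodule.smul_mem _ c ha

lemma comm_mem_commIdeal (a b : U) : a * b - b * a ∈ commIdeal F U :=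
  Submodule.subset_span ⟨1, a, b, 1, by rw [one_mul, mul_one]⟩

/-- The congruence relation modulo `commIdeal F U`. -/
def commIdealCon (F : Type*) (U : Type*) [Field F] [Ring U] [Algebra F U] : RingCon U where
  r a b := a - b ∈ commIdeal F U
  iseqv := by
    refine ⟨fun a => by simpa using (commIdeal F U).zero_mem, fun {a b} h => ?_,
      fun {a b c} h1 h2 => ?_⟩
    · simpa using Submodule.neg_mem _ h
    · simpa using Submodule.add_mem _ h1 h2
  add' := by
    intro a b c d h1 h2
    show a + c - (b + d) ∈ commIdeal F U
    have : a + c - (b + d) = (a - b) + (c - d) := by abel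
    rw [this]; exact Submodule.add_mem _ h1 h2
  mul' := by
    intro a b c d h1 h2
    show a * c - b * d ∈ commIdeal F U
    have : a * c - b * d = (a - b) * c + b * (c - d) := by
      rw [sub_mul, mul_sub]; abel
    rw [this]
    exact Submodule.add_mem _ (commIdeal_mul_right h1 c) (commIdeal_mul_left b h2)

lemma commIdealCon_eq {a b : U} :
    (commIdealCon F U).mk' a = (commIdealCon F U).mk' b ↔ a - b ∈ commIdeal F U :=
  RingCon.eq _

end AuxCommIdeal

/-- a restricted Lie superalgebra with `L` nilpotent, `(L₀,L₀)`
`p`-nilpotent, `dim L₁ = 1`, `(L₁,L₀) = 0`, and `[u(L),u(L)]u(L)` nil of bounded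
index `p^m`, has bounded Lie Engel restricted enveloping algebra. -/
theorem ruea_bounded_engel {F L : Type*} [Field F] [AddCommGroup L] [Module F L]
    (p : ℕ) [CharP F p] (hp : 2 < p)
    (S : RestrictedLieSuperStruct F L p)
    (U : Type*) [Ring U] [Algebra F U] (ι : L →ₗ[F] U) (hU : IsRUEA F S U ι)
    (hnilp : S.toLieSuperStruct.IsNilpotent)
    (h00 : S.IsPNilpotentSet
      (S.toLieSuperStruct.bracketSpan S.L0 S.L0 : Set L))
    (hdim : Module.rank F S.L1 = 1)
    (h10 : ∀ x ∈ S.L1, ∀ y ∈ S.L0, S.bracket x y = 0)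
    (m : ℕ) (hnil : ∀ r ∈ commIdeal F U, r ^ (p ^ m) = 0) :
    IsBoundedLieEngel U := by
  rcases subsingleton_or_nontrivial U with hU0 | hU1
  · exact ⟨1, one_pos, fun x y => Subsingleton.elim _ _⟩
  have hp0 : (0 : ℕ) < p := by omega
  have hprime : p.Prime := (CharP.char_is_prime_or_zero F p).resolve_right (by omega)
  haveI : Fact p.Prime := ⟨hprime⟩
  haveI : CharP U p := charP_of_injective_algebraMap' (A := U) F p
  obtain ⟨c, hc⟩ := hnilp
  -- centrality from commuting with generators
  have hgenCentral : ∀ z : U, (∀ w : L, z * ι w = ι w * z) → ∀ u : U, z * u = u * z := by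
    intro z hz u
    have hu : u ∈ Algebra.adjoin F (Set.range ι) := by rw [hU.gen]; trivial
    induction hu using Algebra.adjoin_induction with
    | mem g hg => obtain ⟨v, rfl⟩ := hg; exact hz v
    | algebraMap r => exact (Algebra.commutes r z).symm
    | add a b _ _ ha hb => rw [mul_add, add_mul, ha, hb]
    | mul a b _ _ ha hb => rw [← mul_assoc, ha, mul_assoc, hb, ← mul_assoc]
  -- the odd part is one-dimensional
  obtain ⟨v₀, hv₀⟩ : ∃ v₀ : S.L1, ∀ v : S.L1, ∃ r : F, r • v₀ = v :=
    rank_le_one_iff.mp (le_of_eq hdim)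
  -- elements of `ι L1` commute with all generators
  have hoddcomm : ∀ x ∈ S.L1, ∀ w : L, ι x * ι w = ι w * ι x := by
    intro x hx w
    obtain ⟨w0, hw0, w1, hw1, rfl⟩ := Submodule.mem_sup.mp
      (show w ∈ S.L0 ⊔ S.L1 by rw [S.compl.sup_eq_top]; trivial)
    have h0 : ι x * ι w0 = ι w0 * ι x := by
      have h := hU.rel_even w0 hw0 x
      have hz : S.toLieSuperStruct.bracket w0 x = 0 := by
        rw [S.anti_even w0 hw0 x, h10 x hx w0 hw0, neg_zero]
      rw [hz, map_zero] at h
      exact (sub_eq_zero.mp h).symm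
    have h1 : ι x * ι w1 = ι w1 * ι x := by
      obtain ⟨a, ha⟩ := hv₀ ⟨x, hx⟩
      obtain ⟨b, hb⟩ := hv₀ ⟨w1, hw1⟩
      have hax : x = a • (v₀ : L) := by
        have := congrArg (Subtype.val) ha; simpa using this.symm
      have hbx : w1 = b • (v₀ : L) := by
        have := congrArg (Subtype.val) hb; simpa using this.symm
      rw [hax, hbx, map_smul, map_smul, smul_mul_assoc, smul_mul_assoc,
        mul_smul_comm, mul_smul_comm, smul_comm]
    rw [map_add, mul_add, add_mul, h0, h1]
  -- iterated p-maps stay in L0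
  have hmemL0 : ∀ x0 ∈ S.L0, ∀ j, S.pmap^[j] x0 ∈ S.L0 := by
    intro x0 hx0 j
    induction j with
    | zero => simpa using hx0
    | succ j ih => rw [Function.iterate_succ_apply']; exact S.pmap_mem _ ih
  -- ad of iterated p-map is a p-power of ad
  have hadpow : ∀ x0 ∈ S.L0, ∀ j,
      (S.toLieSuperStruct.bracket (S.pmap^[j] x0))
        = (S.toLieSuperStruct.bracket x0 : Module.End F L) ^ (p ^ j) := by
    intro x0 hx0 j
    induction j with
    | zero => simp
    | succ j ih =>
      rw [Function.iterate_succ_apply']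
      ext v
      rw [S.pmap_ad _ (hmemL0 x0 hx0 j) v]
      have : (S.toLieSuperStruct.bracket (S.pmap^[j] x0) : Module.End F L) ^ p
          = (S.toLieSuperStruct.bracket x0 : Module.End F L) ^ (p ^ (j + 1)) := by
        rw [ih, ← pow_mul, ← pow_succ]
      rw [this]
  -- iterated brackets land in the lower central series
  have hlcsmem : ∀ x0 ∈ S.L0, ∀ n, ∀ v : L,
      ((S.toLieSuperStruct.bracket x0 : Module.End F L) ^ n) v ∈ S.toLieSuperStruct.lcs n := by
    intro x0 hx0 n
    induction n with
    | zero =>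
      intro v
      simp only [pow_zero, Module.End.one_apply]
      exact Submodule.mem_top
    | succ n ih =>
      intro v
      rw [pow_succ']
      have hv := ih v
      show S.toLieSuperStruct.bracket x0
        (((S.toLieSuperStruct.bracket x0 : Module.End F L) ^ n) v) ∈ S.toLieSuperStruct.lcs (n+1)
      rw [S.anti_even x0 hx0]
      refine Submodule.neg_mem _ ?_
      have hdef : S.toLieSuperStruct.lcs (n+1)
          = S.toLieSuperStruct.bracketSpan (S.toLieSuperStruct.lcs n) ⊤ := rfl
      rw [hdef]
      exact Submodule.subset_span ⟨_, hv, x0, Submodule.mem_top, rfl⟩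
  -- the lower central series stays at ⊥
  have hlcsbot : ∀ k, S.toLieSuperStruct.lcs (c + k) = ⊥ := by
    intro k
    induction k with
    | zero => simpa using hc
    | succ k ih =>
      have hdef : S.toLieSuperStruct.lcs (c + (k+1))
          = S.toLieSuperStruct.bracketSpan (S.toLieSuperStruct.lcs (c + k)) ⊤ := rfl
      rw [hdef, ih]
      apply le_bot_iff.mp
      apply Submodule.span_le.mpr
      rintro w ⟨xx, hxx, yy, -, rfl⟩
      have hx0 : xx = 0 := by simpa using hxx
      simp [hx0]
  -- the c-fold p-map of an even element has vanishing bracket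
  have hzero : ∀ x0 ∈ S.L0, ∀ w : L,
      S.toLieSuperStruct.bracket (S.pmap^[c] x0) w = 0 := by
    intro x0 hx0 w
    have hcc : c < p ^ c := Nat.lt_pow_self (n := c) (by omega)
    have h1 : S.toLieSuperStruct.bracket (S.pmap^[c] x0) w
        = ((S.toLieSuperStruct.bracket x0 : Module.End F L) ^ (p ^ c)) w := by
      rw [hadpow x0 hx0 c]
    rw [h1]
    have h2 := hlcsmem x0 hx0 (p ^ c) w
    have h3 : S.toLieSuperStruct.lcs (p ^ c) = ⊥ := by
      have : p ^ c = c + (p ^ c - c) := by omega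
      rw [this]; exact hlcsbot _
    rw [h3] at h2
    simpa using h2
  -- p^j-th powers of even generators
  have hiotapow : ∀ x0 ∈ S.L0, ∀ j, (ι x0) ^ (p ^ j) = ι (S.pmap^[j] x0) := by
    intro x0 hx0 j
    induction j with
    | zero => simp
    | succ j ih =>
      rw [Function.iterate_succ_apply', hU.rel_p _ (hmemL0 x0 hx0 j), ← ih, ← pow_mul, ← pow_succ]
  -- the quotient modulo the commutator ideal
  haveI : Nontrivial (commIdealCon F U).Quotient := by
    refine ⟨(commIdealCon F U).mk' 1, (commIdealCon F U).mk' 0, fun h => ?_⟩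
    have h1 : (1 : U) ∈ commIdeal F U := by simpa using commIdealCon_eq.mp h
    exact one_ne_zero (α := U) (by simpa using hnil 1 h1)
  haveI : CharP (commIdealCon F U).Quotient p := by
    constructor
    intro n
    constructor
    · intro h
      have hn : ((n : ℕ) : U) ∈ commIdeal F U := by
        have h2 : (commIdealCon F U).mk' ((n : ℕ) : U) = (commIdealCon F U).mk' 0 := by
          rw [map_natCast, map_zero]; exact h
        simpa using commIdealCon_eq.mp h2
      have h3 := hnil _ hn
      have h4 : ((n ^ (p ^ m) : ℕ) : U) = 0 := by push_cast; exact h3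
      exact hprime.dvd_of_dvd_pow ((CharP.cast_eq_zero_iff U p _).mp h4)
    · intro h
      rw [← map_natCast ((commIdealCon F U).mk'), (CharP.cast_eq_zero_iff U p n).mpr h, map_zero]
  haveI : ExpChar (commIdealCon F U).Quotient p := .prime hprime
  have hcommQ : ∀ a b : U,
      Commute ((commIdealCon F U).mk' a) ((commIdealCon F U).mk' b) := by
    intro a b
    show _ * _ = _ * _
    rw [← map_mul, ← map_mul]
    exact commIdealCon_eq.mpr (comm_mem_commIdeal a b)
  have hfrobAdd : ∀ a b : U, (a + b) ^ (p ^ c) - (a ^ (p ^ c) + b ^ (p ^ c)) ∈ commIdeal F U := by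
    intro a b
    apply commIdealCon_eq.mp
    rw [map_pow, map_add, map_add, map_pow, map_pow]
    exact add_pow_expChar_pow_of_commute _ _ (hcommQ a b)
  have hfrobMul : ∀ a b : U, (a * b) ^ (p ^ c) - a ^ (p ^ c) * b ^ (p ^ c) ∈ commIdeal F U := by
    intro a b
    apply commIdealCon_eq.mp
    rw [map_pow, map_mul, map_mul, map_pow, map_pow]
    exact (hcommQ a b).mul_pow _
  -- key decomposition: p^c-th powers are central modulo the commutator ideal
  have haddP : ∀ a b : U,
      (∃ z w : U, a ^ (p ^ c) = z + w ∧ (∀ t, z * t = t * z) ∧ w ∈ commIdeal F U) →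
      (∃ z w : U, b ^ (p ^ c) = z + w ∧ (∀ t, z * t = t * z) ∧ w ∈ commIdeal F U) →
      (∃ z w : U, (a + b) ^ (p ^ c) = z + w ∧ (∀ t, z * t = t * z) ∧ w ∈ commIdeal F U) := by
    rintro a b ⟨za, wa, hae, hac, haw⟩ ⟨zb, wb, hbe, hbc, hbw⟩
    refine ⟨za + zb, wa + wb + ((a + b) ^ (p ^ c) - (a ^ (p ^ c) + b ^ (p ^ c))), ?_, ?_, ?_⟩
    · rw [hae, hbe]; abel
    · intro t; rw [add_mul, mul_add, hac t, hbc t]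
    · exact Submodule.add_mem _ (Submodule.add_mem _ haw hbw) (hfrobAdd a b)
  have hmain : ∀ u : U, ∃ z w : U,
      u ^ (p ^ c) = z + w ∧ (∀ t, z * t = t * z) ∧ w ∈ commIdeal F U := by
    intro u
    have hu : u ∈ Algebra.adjoin F (Set.range ι) := by rw [hU.gen]; trivial
    induction hu using Algebra.adjoin_induction with
    | mem g hg =>
      obtain ⟨x, rfl⟩ := hg
      obtain ⟨x0, hx0, x1, hx1, hxe⟩ := Submodule.mem_sup.mp
        (show x ∈ S.L0 ⊔ S.L1 by rw [S.compl.sup_eq_top]; trivial)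
      have hιx : ι x = ι x0 + ι x1 := by rw [← map_add, hxe]
      rw [hιx]
      apply haddP
      · refine ⟨ι (S.pmap^[c] x0), 0, by rw [add_zero, hiotapow x0 hx0 c], ?_, Submodule.zero_mem _⟩
        intro t
        refine hgenCentral _ (fun w => ?_) t
        have h := hU.rel_even (S.pmap^[c] x0) (hmemL0 x0 hx0 c) w
        rw [hzero x0 hx0 w, map_zero] at h
        exact sub_eq_zero.mp h
      · refine ⟨(ι x1) ^ (p ^ c), 0, (add_zero _).symm, ?_, Submodule.zero_mem _⟩
        intro t
        have hc1 : Commute (ι x1) t := hgenCentral _ (hoddcomm x1 hx1) t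
        exact (hc1.pow_left _)
    | algebraMap r =>
      refine ⟨algebraMap F U r ^ (p ^ c), 0, (add_zero _).symm, ?_, Submodule.zero_mem _⟩
      intro t
      rw [← map_pow]
      exact Algebra.commutes _ t
    | add a b _ _ ha hb => exact haddP a b ha hb
    | mul a b _ _ ha hb =>
      obtain ⟨za, wa, hae, hac, haw⟩ := ha
      obtain ⟨zb, wb, hbe, hbc, hbw⟩ := hb
      refine ⟨za * zb, za * wb + wa * zb + wa * wb
        + ((a * b) ^ (p ^ c) - a ^ (p ^ c) * b ^ (p ^ c)), ?_, ?_, ?_⟩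
      · have h1 : a ^ (p ^ c) * b ^ (p ^ c) = za * zb + za * wb + wa * zb + wa * wb := by
          rw [hae, hbe, add_mul, mul_add, mul_add]; abel
        have h2 : za * zb + (za * wb + wa * zb + wa * wb
            + ((a * b) ^ (p ^ c) - a ^ (p ^ c) * b ^ (p ^ c)))
            = (za * zb + za * wb + wa * zb + wa * wb)
              + ((a * b) ^ (p ^ c) - a ^ (p ^ c) * b ^ (p ^ c)) := by abel
        rw [h2, ← h1]; abel
      · intro t; rw [mul_assoc, hbc t, ← mul_assoc, hac t, mul_assoc]
      · refine Submodule.add_mem _ (Submodule.add_mem _ (Submodule.add_mem _ ?_ ?_) ?_) (hfrobMul a b)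
        · exact commIdeal_mul_left za hbw
        · exact commIdeal_mul_right haw zb
        · exact commIdeal_mul_right haw wb
  -- finale
  refine ⟨p ^ (c + m), pow_pos hp0 _, fun x y => ?_⟩
  haveI : Nontrivial (Module.End F U) :=
    ⟨1, 0, fun h => one_ne_zero (α := U) (by simpa using LinearMap.congr_fun h 1)⟩
  haveI : CharP (Module.End F U) p := charP_of_injective_algebraMap' (A := Module.End F U) F p
  haveI : ExpChar (Module.End F U) p := .prime hprime
  have hcommRL : ∀ a b : U,
      Commute (LinearMap.mulRight F a : Module.End F U) (LinearMap.mulLeft F b) := by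
    intro a b
    show _ * _ = _ * _
    ext t
    simp [Module.End.mul_apply, mul_assoc]
  have hiter : ∀ (n : ℕ) (x : U), engelIter y n x
      = (((LinearMap.mulRight F y - LinearMap.mulLeft F y : Module.End F U)) ^ n) x := by
    intro n
    induction n with
    | zero => intro x; simp [engelIter]
    | succ n ih =>
      intro x
      have h1 : engelIter y (n+1) x = (engelIter y n x) * y - y * (engelIter y n x) := by
        show (fun a => a * y - y * a)^[n+1] x = _
        rw [Function.iterate_succ_apply']
        rfl
      rw [h1, ih, pow_succ']
      simp [Module.End.mul_apply]
  obtain ⟨z, w, hzw, hzc, hwI⟩ := hmain y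
  have hstep1 : ((LinearMap.mulRight F y - LinearMap.mulLeft F y : Module.End F U)) ^ (p ^ c)
      = LinearMap.mulRight F w - LinearMap.mulLeft F w := by
    rw [sub_pow_expChar_pow_of_commute _ _ (hcommRL y y), LinearMap.pow_mulRight,
      LinearMap.pow_mulLeft, hzw]
    ext t
    simp only [LinearMap.sub_apply, LinearMap.mulRight_apply, LinearMap.mulLeft_apply]
    rw [mul_add, add_mul, hzc t]
    abel
  have hstep2 : ((LinearMap.mulRight F w - LinearMap.mulLeft F w : Module.End F U)) ^ (p ^ m)
      = 0 := by
    rw [sub_pow_expChar_pow_of_commute _ _ (hcommRL w w), LinearMap.pow_mulRight,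
      LinearMap.pow_mulLeft, hnil w hwI]
    ext t
    simp
  rw [hiter, pow_add, pow_mul, hstep1, hstep2]
  simp
end
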